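/- arXiv:1610.09851 — 13 statements merged into one kernel-verified Lean document; each statement's English description precedes it below -/
import Mathlib

section
/- Let G be a countable discrete group and let T and T' be minimal free continuous actions of G on locally compact Cantor spaces X and X', respectively. Let A ⊆ X and A' ⊆ X' be nonempty compact open subsets and let θ : A → A' be a homeomorphism such that for every x ∈ A and every g ∈ G: (i) T_g x ∈ A if and only if T'_g(θx) ∈ A', and (ii) θ(T_g x) = T'_g(θx) whenever T_g x ∈ A. Then there exists a homeomorphism θ̃ : X → X' satisfying θ̃ ∘ T_g = T'_g ∘ θ̃ for every g ∈ G and θ̃(x) = θ(x) for all x ∈ A; moreover, θ̃ is the unique homeomorphism from X to X' that intertwines T with T' and extends θ. -/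
/- STATEMENT 0: extension of a compact-open "partial conjugacy" to a full topological
conjugacy between minimal free actions of a countable group on locally compact
Cantor spaces. -/
theorem stmt0
    {G : Type*} [Group G] [Countable G]
    {X X' : Type*}
    [TopologicalSpace X] [LocallyCompactSpace X] [SecondCountableTopology X]
    [T2Space X] [TotallyDisconnectedSpace X] [PerfectSpace X] [Nonempty X]
    [TopologicalSpace X'] [LocallyCompactSpace X'] [SecondCountableTopology X']
    [T2Space X'] [TotallyDisconnectedSpace X'] [PerfectSpace X'] [Nonempty X']
    (T : G → X ≃ₜ X) (T' : G → X' ≃ₜ X')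
    (hTmul : ∀ g h x, T (g * h) x = T g (T h x))
    (hT'mul : ∀ g h x, T' (g * h) x = T' g (T' h x))
    (hTone : ∀ x, T 1 x = x) (hT'one : ∀ x, T' 1 x = x)
    (hmin : ∀ x : X, Dense (Set.range fun g : G => T g x))
    (hmin' : ∀ x : X', Dense (Set.range fun g : G => T' g x))
    (hfree : ∀ (g : G) (x : X), T g x = x → g = 1)
    (hfree' : ∀ (g : G) (x : X'), T' g x = x → g = 1)
    (A : Set X) (A' : Set X')
    (hAc : IsCompact A) (hAo : IsOpen A) (hAne : A.Nonempty)
    (hA'c : IsCompact A') (hA'o : IsOpen A')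
    (θ : A ≃ₜ A')
    (hiff : ∀ (x : A) (g : G), T g (x : X) ∈ A ↔ T' g ((θ x : A') : X') ∈ A')
    (heq : ∀ (x : A) (g : G) (h : T g (x : X) ∈ A),
      ((θ ⟨T g (x : X), h⟩ : A') : X') = T' g ((θ x : A') : X')) :
    ∃! Φ : X ≃ₜ X',
      (∀ (g : G) (x : X), Φ (T g x) = T' g (Φ x)) ∧
      (∀ x : A, Φ (x : X) = ((θ x : A') : X')) := by
  -- cancellation lemmas
  have Tcan : ∀ (g : G) (z : X), T g⁻¹ (T g z) = z := fun g z => by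
    rw [← hTmul, inv_mul_cancel, hTone]
  have Tcan' : ∀ (g : G) (z : X), T g (T g⁻¹ z) = z := fun g z => by
    rw [← hTmul, mul_inv_cancel, hTone]
  have T'can : ∀ (g : G) (z : X'), T' g⁻¹ (T' g z) = z := fun g z => by
    rw [← hT'mul, inv_mul_cancel, hT'one]
  have T'can' : ∀ (g : G) (z : X'), T' g (T' g⁻¹ z) = z := fun g z => by
    rw [← hT'mul, mul_inv_cancel, hT'one]
  have hA'ne : A'.Nonempty := ⟨θ ⟨hAne.choose, hAne.choose_spec⟩, (θ _).2⟩
  have exg : ∀ x : X, ∃ g : G, T g x ∈ A := by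
    intro x
    obtain ⟨y, hyr, hyA⟩ := (hmin x).exists_mem_open hAo hAne
    obtain ⟨g, rfl⟩ := hyr
    exact ⟨g, hyA⟩
  have exg' : ∀ x' : X', ∃ g : G, T' g x' ∈ A' := by
    intro x
    obtain ⟨y, hyr, hyA⟩ := (hmin' x).exists_mem_open hA'o hA'ne
    obtain ⟨g, rfl⟩ := hyr
    exact ⟨g, hyA⟩
  choose σ hσ using exg
  choose σ' hσ' using exg'
  -- mirrored hypotheses for θ.symm
  have hiff' : ∀ (x' : A') (g : G),
      T' g (x' : X') ∈ A' ↔ T g ((θ.symm x' : A) : X) ∈ A := by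
    intro x' g
    have h := hiff (θ.symm x') g
    rw [θ.apply_symm_apply] at h
    exact h.symm
  have heq' : ∀ (x' : A') (g : G) (h : T' g (x' : X') ∈ A'),
      ((θ.symm ⟨T' g (x' : X'), h⟩ : A) : X) = T g ((θ.symm x' : A) : X) := by
    intro x' g h
    have hg : T g ((θ.symm x' : A) : X) ∈ A := (hiff' x' g).mp h
    have h2 := heq (θ.symm x') g hg
    rw [θ.apply_symm_apply] at h2
    have h3 : θ ⟨T g ((θ.symm x' : A) : X), hg⟩ = ⟨T' g (x' : X'), h⟩ :=
      Subtype.ext h2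
    rw [← h3, θ.symm_apply_apply]
  -- the maps
  set φ : X → X' := fun x => T' (σ x)⁻¹ ((θ ⟨T (σ x) x, hσ x⟩ : A') : X') with hφ
  set ψ : X' → X := fun x' =>
    T (σ' x')⁻¹ ((θ.symm ⟨T' (σ' x') x', hσ' x'⟩ : A) : X) with hψ
  -- well-definedness of φ
  have key : ∀ (x : X) (g : G) (hg : T g x ∈ A),
      φ x = T' g⁻¹ ((θ ⟨T g x, hg⟩ : A') : X') := by
    intro x g hg
    set h := σ x with hh
    have hmem : T (g * h⁻¹) (T h x) = T g x := by
      rw [← hTmul, inv_mul_cancel_right]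
    have hmem' : T (g * h⁻¹) ((⟨T h x, hσ x⟩ : A) : X) ∈ A := by
      simpa [hmem] using hg
    have e := heq ⟨T h x, hσ x⟩ (g * h⁻¹) hmem'
    have e2 : (θ ⟨T (g * h⁻¹) ((⟨T h x, hσ x⟩ : A) : X), hmem'⟩ : A')
        = θ ⟨T g x, hg⟩ := by
      congr 1
      exact Subtype.ext hmem
    rw [e2] at e
    -- e : (θ ⟨T g x, hg⟩ : X') = T' (g * h⁻¹) (θ ⟨T h x, hσ x⟩)
    show T' h⁻¹ ((θ ⟨T h x, hσ x⟩ : A') : X') = T' g⁻¹ ((θ ⟨T g x, hg⟩ : A') : X')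
    rw [e, ← hT'mul]
    congr 1
    group
  have key' : ∀ (x' : X') (g : G) (hg : T' g x' ∈ A'),
      ψ x' = T g⁻¹ ((θ.symm ⟨T' g x', hg⟩ : A) : X) := by
    intro x g hg
    set h := σ' x with hh
    have hmem : T' (g * h⁻¹) (T' h x) = T' g x := by
      rw [← hT'mul, inv_mul_cancel_right]
    have hmem' : T' (g * h⁻¹) ((⟨T' h x, hσ' x⟩ : A') : X') ∈ A' := by
      simpa [hmem] using hg
    have e := heq' ⟨T' h x, hσ' x⟩ (g * h⁻¹) hmem'
    have e2 : (θ.symm ⟨T' (g * h⁻¹) ((⟨T' h x, hσ' x⟩ : A') : X'), hmem'⟩ : A)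
        = θ.symm ⟨T' g x, hg⟩ := by
      congr 1
      exact Subtype.ext hmem
    rw [e2] at e
    show T h⁻¹ ((θ.symm ⟨T' h x, hσ' x⟩ : A) : X) = T g⁻¹ ((θ.symm ⟨T' g x, hg⟩ : A) : X)
    rw [e, ← hTmul]
    congr 1
    group
  -- inverses
  have leftInv : ∀ x : X, ψ (φ x) = x := by
    intro x
    set g := σ x with hg
    have h1 : T' g (φ x) = ((θ ⟨T g x, hσ x⟩ : A') : X') := by
      simp only [hφ, hg, T'can']
    have hmem : T' g (φ x) ∈ A' := by rw [h1]; exact (θ _).2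
    rw [key' (φ x) g hmem]
    have h2 : (⟨T' g (φ x), hmem⟩ : A') = θ ⟨T g x, hσ x⟩ := Subtype.ext h1
    rw [h2, θ.symm_apply_apply]
    exact Tcan g x
  have rightInv : ∀ x' : X', φ (ψ x') = x' := by
    intro x
    set g := σ' x with hg
    have h1 : T g (ψ x) = ((θ.symm ⟨T' g x, hσ' x⟩ : A) : X) := by
      simp only [hψ, hg, Tcan']
    have hmem : T g (ψ x) ∈ A := by rw [h1]; exact (θ.symm _).2
    rw [key (ψ x) g hmem]
    have h2 : (⟨T g (ψ x), hmem⟩ : A) = θ.symm ⟨T' g x, hσ' x⟩ := Subtype.ext h1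
    rw [h2, θ.apply_symm_apply]
    exact T'can g x
  -- continuity
  have contφ : Continuous φ := by
    rw [continuous_iff_continuousAt]
    intro x
    set g := σ x with hg
    have hU : IsOpen ((T g) ⁻¹' A) := hAo.preimage (T g).continuous
    apply ContinuousOn.continuousAt ?_ (hU.mem_nhds (hσ x))
    rw [continuousOn_iff_continuous_restrict]
    have hr : ((T g) ⁻¹' A).restrict φ
        = fun (y : (T g) ⁻¹' A) => T' g⁻¹ ((θ ⟨T g y.1, y.2⟩ : A') : X') := by
      funext y
      exact key y.1 g y.2
    change Continuous (((T g) ⁻¹' A).restrict φ)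
    rw [hr]
    exact (T' g⁻¹).continuous.comp (continuous_subtype_val.comp
      (θ.continuous.comp (Continuous.subtype_mk
        ((T g).continuous.comp continuous_subtype_val) _)))
  have contψ : Continuous ψ := by
    rw [continuous_iff_continuousAt]
    intro x
    set g := σ' x with hg
    have hU : IsOpen ((T' g) ⁻¹' A') := hA'o.preimage (T' g).continuous
    apply ContinuousOn.continuousAt ?_ (hU.mem_nhds (hσ' x))
    rw [continuousOn_iff_continuous_restrict]
    have hr : ((T' g) ⁻¹' A').restrict ψ
        = fun (y : (T' g) ⁻¹' A') => T g⁻¹ ((θ.symm ⟨T' g y.1, y.2⟩ : A) : X) := by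
      funext y
      exact key' y.1 g y.2
    change Continuous (((T' g) ⁻¹' A').restrict ψ)
    rw [hr]
    exact (T g⁻¹).continuous.comp (continuous_subtype_val.comp
      (θ.symm.continuous.comp (Continuous.subtype_mk
        ((T' g).continuous.comp continuous_subtype_val) _)))
  -- equivariance
  have hequiv : ∀ (h : G) (x : X), φ (T h x) = T' h (φ x) := by
    intro h x
    set g := σ x with hg
    have hmemeq : T (g * h⁻¹) (T h x) = T g x := by
      rw [← hTmul, inv_mul_cancel_right]
    have hmem : T (g * h⁻¹) (T h x) ∈ A := by rw [hmemeq]; exact hσ x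
    rw [key (T h x) (g * h⁻¹) hmem]
    have e2 : (θ ⟨T (g * h⁻¹) (T h x), hmem⟩ : A') = θ ⟨T g x, hσ x⟩ := by
      congr 1; exact Subtype.ext hmemeq
    rw [e2]
    show T' (g * h⁻¹)⁻¹ _ = T' h (T' g⁻¹ _)
    rw [← hT'mul]
    congr 1
    group
  -- extension
  have hext : ∀ x : A, φ (x : X) = ((θ x : A') : X') := by
    intro x
    have h1 : T (1 : G) (x : X) ∈ A := by rw [hTone]; exact x.2
    rw [key (x : X) 1 h1]
    have e2 : (⟨T (1 : G) (x : X), h1⟩ : A) = x := Subtype.ext (hTone x)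
    rw [e2, inv_one, hT'one]
  refine ⟨⟨⟨φ, ψ, leftInv, rightInv⟩, contφ, contψ⟩, ⟨hequiv, hext⟩, ?_⟩
  rintro Φ' ⟨hequiv', hext'⟩
  ext x
  show Φ' x = φ x
  set g := σ x with hg
  have h1 : Φ' (T g x) = ((θ ⟨T g x, hσ x⟩ : A') : X') := hext' ⟨T g x, hσ x⟩
  have h2 : T' g (Φ' x) = ((θ ⟨T g x, hσ x⟩ : A') : X') := by
    rw [← hequiv' g x]; exact h1
  have h3 : Φ' x = T' g⁻¹ ((θ ⟨T g x, hσ x⟩ : A') : X') := by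
    rw [← h2, T'can]
  rw [h3]
end

section
/- Let C, D, E be nonempty finite subsets of the nonnegative integers. Then the identity P_C · P_D = P_E holds in ℤ[X] if and only if (C − C) ∩ (D − D) = {0} and E = C + D. -/
open Polynomial Pointwise

/- STATEMENT 1: for nonempty finite sets C, D, E of nonnegative integers,
P_C · P_D = P_E in ℤ[X] iff (C − C) ∩ (D − D) = {0} and E = C + D. -/
theorem stmt1 (C D E : Finset ℕ) (hC : C.Nonempty) (hD : D.Nonempty) (hE : E.Nonempty) :
    (∑ c ∈ C, (X : ℤ[X]) ^ c) * (∑ d ∈ D, (X : ℤ[X]) ^ d) = ∑ e ∈ E, (X : ℤ[X]) ^ e ↔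
      ((C.image (Nat.cast : ℕ → ℤ) - C.image (Nat.cast : ℕ → ℤ)) ∩
          (D.image (Nat.cast : ℕ → ℤ) - D.image (Nat.cast : ℕ → ℤ)) = {0} ∧
        E = C + D) := by
  have key : ∀ n : ℕ, ((∑ c ∈ C, (X : ℤ[X]) ^ c) * (∑ d ∈ D, (X : ℤ[X]) ^ d)).coeff n
      = (((C ×ˢ D).filter fun p => p.1 + p.2 = n).card : ℤ) := by
    intro n
    rw [Finset.sum_mul_sum]
    simp_rw [← pow_add]
    rw [← Finset.sum_product']
    simp only [Polynomial.finset_sum_coeff, Polynomial.coeff_X_pow]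
    rw [Finset.sum_boole]
    have hfe : (Finset.filter (fun x : ℕ × ℕ => n = x.1 + x.2) (C ×ˢ D))
        = Finset.filter (fun p : ℕ × ℕ => p.1 + p.2 = n) (C ×ˢ D) := by
      apply Finset.filter_congr
      intro p _
      simp [eq_comm]
    rw [hfe]
  have keyE : ∀ n : ℕ, (∑ e ∈ E, (X : ℤ[X]) ^ e).coeff n = if n ∈ E then 1 else 0 := by
    intro n
    simp only [Polynomial.finset_sum_coeff, Polynomial.coeff_X_pow]
    simp [Finset.sum_ite_eq, eq_comm]
  rw [Polynomial.ext_iff]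
  simp only [key, keyE]
  constructor
  · intro h
    have hcard : ∀ n : ℕ, ((C ×ˢ D).filter fun p => p.1 + p.2 = n).card
        = if n ∈ E then 1 else 0 := by
      intro n
      have := h n
      by_cases hn : n ∈ E
      · rw [if_pos hn] at this ⊢; exact_mod_cast this
      · rw [if_neg hn] at this ⊢; exact_mod_cast this
    have hE' : E = C + D := by
      ext n
      rw [Finset.mem_add]
      constructor
      · intro hn
        have := hcard n
        rw [if_pos hn] at this
        obtain ⟨p, hp⟩ := Finset.card_eq_one.mp this
        have hpm : p ∈ (C ×ˢ D).filter fun p => p.1 + p.2 = n := by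
          rw [hp]; exact Finset.mem_singleton_self p
        simp only [Finset.mem_filter, Finset.mem_product] at hpm
        exact ⟨p.1, hpm.1.1, p.2, hpm.1.2, hpm.2⟩
      · rintro ⟨c, hc, d, hd, rfl⟩
        have := hcard (c + d)
        by_contra hn
        rw [if_neg hn, Finset.card_eq_zero] at this
        have : (c, d) ∈ (C ×ˢ D).filter fun p => p.1 + p.2 = c + d := by
          simp [hc, hd]
        simp_all
        exact this c d hc hd rfl
    refine ⟨?_, hE'⟩
    apply Finset.Subset.antisymm
    · intro z hz
      simp only [Finset.mem_inter, Finset.mem_sub, Finset.mem_image] at hz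
      obtain ⟨⟨a, ⟨c, hc, rfl⟩, b, ⟨c', hc', rfl⟩, hzc⟩,
        ⟨a', ⟨d', hd', rfl⟩, b', ⟨d, hd, rfl⟩, hzd⟩⟩ := hz
      -- z = c - c' = d' - d
      have heq : (c : ℤ) + d = c' + d' := by linarith [hzc, hzd] 
      have heqn : c + d = c' + d' := by exact_mod_cast heq
      have h1 : (c, d) ∈ (C ×ˢ D).filter fun p => p.1 + p.2 = c + d := by
        simp [hc, hd]
      have h2 : (c', d') ∈ (C ×ˢ D).filter fun p => p.1 + p.2 = c + d := by
        simp [hc', hd', heqn.symm]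
      have hle : ((C ×ˢ D).filter fun p => p.1 + p.2 = c + d).card ≤ 1 := by
        rw [hcard]; split <;> omega
      have : (c, d) = (c', d') := by
        exact Finset.card_le_one.mp hle _ h1 _ h2
      have : c = c' := congrArg Prod.fst this
      simp only [Finset.mem_singleton]
      omega
    · intro z hz
      simp only [Finset.mem_singleton] at hz
      subst hz
      obtain ⟨c, hc⟩ := hC
      obtain ⟨d, hd⟩ := hD
      simp only [Finset.mem_inter, Finset.mem_sub, Finset.mem_image]
      exact ⟨⟨_, ⟨c, hc, rfl⟩, _, ⟨c, hc, rfl⟩, by ring⟩,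
        ⟨_, ⟨d, hd, rfl⟩, _, ⟨d, hd, rfl⟩, by ring⟩⟩
  · rintro ⟨h0, rfl⟩
    intro n
    by_cases hn : n ∈ C + D
    · rw [if_pos hn]
      rw [Finset.mem_add] at hn
      obtain ⟨c, hc, d, hd, rfl⟩ := hn
      have : ((C ×ˢ D).filter fun p => p.1 + p.2 = c + d) = {(c, d)} := by
        apply Finset.eq_singleton_iff_unique_mem.mpr
        refine ⟨by simp [hc, hd], ?_⟩
        rintro ⟨c', d'⟩ hp
        simp only [Finset.mem_filter, Finset.mem_product] at hp
        obtain ⟨⟨hc', hd'⟩, heq⟩ := hp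
        have hz : ((c : ℤ) - c') ∈ (C.image (Nat.cast : ℕ → ℤ) - C.image (Nat.cast : ℕ → ℤ)) ∩
            (D.image (Nat.cast : ℕ → ℤ) - D.image (Nat.cast : ℕ → ℤ)) := by
          simp only [Finset.mem_inter, Finset.mem_sub, Finset.mem_image]
          refine ⟨⟨_, ⟨c, hc, rfl⟩, _, ⟨c', hc', rfl⟩, rfl⟩,
            ⟨_, ⟨d', hd', rfl⟩, _, ⟨d, hd, rfl⟩, ?_⟩⟩
          have : (c' : ℤ) + d' = c + d := by exact_mod_cast heq
          linarith
        rw [h0, Finset.mem_singleton, sub_eq_zero] at hz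
        have hcc : c' = c := by exact_mod_cast hz.symm
        have : d' = d := by omega
        simp [hcc, this]
      rw [this]
      simp
    · rw [if_neg hn]
      have : ((C ×ˢ D).filter fun p => p.1 + p.2 = n) = ∅ := by
        rw [Finset.filter_eq_empty_iff]
        rintro ⟨c, d⟩ hp heq
        rw [Finset.mem_product] at hp
        exact hn (Finset.mem_add.mpr ⟨c, hp.1, d, hp.2, heq⟩)
      rw [this]
      simp
end

section
/- Let D_1, …, D_N be finite subsets of the nonnegative integers with 0 ∈ D_i for every i, and suppose that for each n ∈ {2, …, N} one has (D_n − D_n) ∩ ((D_1 − D_1) + (D_2 − D_2) + ⋯ + (D_{n−1} − D_{n−1})) = {0}. Then P_{D_1} · P_{D_2} ⋯ P_{D_N} = P_{D_1 + D_2 + ⋯ + D_N} in ℤ[X]. -/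
open Polynomial Pointwise

private lemma sub_sum_subset {ι : Type*} (t : Finset ι) (T : ι → Finset ℤ) :
    (∑ i ∈ t, T i) - (∑ i ∈ t, T i) ⊆ ∑ i ∈ t, (T i - T i) := by
  classical
  induction t using Finset.induction with
  | empty => simp
  | insert a s hx ih =>
    rw [Finset.sum_insert hx, Finset.sum_insert hx]
    intro z hz
    rw [Finset.mem_sub] at hz
    obtain ⟨u, hu, v, hv, rfl⟩ := hz
    rw [Finset.mem_add] at hu hv
    obtain ⟨a1, ha1, s1, hs1, rfl⟩ := hu
    obtain ⟨a2, ha2, s2, hs2, rfl⟩ := hv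
    rw [Finset.mem_add]
    exact ⟨a1 - a2, Finset.sub_mem_sub ha1 ha2, s1 - s2,
      ih (Finset.sub_mem_sub hs1 hs2), by ring⟩

private lemma image_cast_sum {ι : Type*} (t : Finset ι) (T : ι → Finset ℕ) :
    (∑ i ∈ t, T i).image (Nat.cast : ℕ → ℤ) = ∑ i ∈ t, (T i).image (Nat.cast : ℕ → ℤ) := by
  classical
  induction t using Finset.induction with
  | empty =>
    simp only [Finset.sum_empty]
    rfl
  | insert a s hx ih =>
    rw [Finset.sum_insert hx, Finset.sum_insert hx, ← ih]
    have := Finset.image_add (Nat.castRingHom ℤ) (s := T a) (t := ∑ i ∈ s, T i)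
    simpa using this

private lemma key_mul (A B : Finset ℕ)
    (hinj : ∀ a ∈ A, ∀ b ∈ B, ∀ a' ∈ A, ∀ b' ∈ B, a + b = a' + b' → a = a' ∧ b = b') :
    (∑ a ∈ A, (X : ℤ[X]) ^ a) * (∑ b ∈ B, (X : ℤ[X]) ^ b) = ∑ c ∈ A + B, (X : ℤ[X]) ^ c := by
  classical
  rw [← Finset.image_add_product, Finset.sum_image, Finset.sum_product, Finset.sum_mul_sum]
  · simp [pow_add]
  · rintro ⟨a, b⟩ hab ⟨a', b'⟩ hab' h
    simp only [Finset.mem_coe, Finset.mem_product] at hab hab'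
    obtain ⟨h1, h2⟩ := hinj a hab.1 b hab.2 a' hab'.1 b' hab'.2 h
    simp [h1, h2]

theorem stmt2 (N : ℕ) (D : ℕ → Finset ℕ)
    (h0 : ∀ i ∈ Finset.Icc 1 N, 0 ∈ D i)
    (hind : ∀ n ∈ Finset.Icc 2 N,
      ((D n).image (Nat.cast : ℕ → ℤ) - (D n).image (Nat.cast : ℕ → ℤ)) ∩
        (∑ i ∈ Finset.Icc 1 (n - 1),
          ((D i).image (Nat.cast : ℕ → ℤ) - (D i).image (Nat.cast : ℕ → ℤ))) = {0}) :
    ∏ i ∈ Finset.Icc 1 N, (∑ c ∈ D i, (X : ℤ[X]) ^ c) =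
      ∑ c ∈ (∑ i ∈ Finset.Icc 1 N, D i), (X : ℤ[X]) ^ c := by
  classical
  induction N with
  | zero =>
    simp only [Finset.Icc_eq_empty_of_lt Nat.zero_lt_one, Finset.prod_empty, Finset.sum_empty]
    rw [show (0 : Finset ℕ) = {0} from rfl]
    simp
  | succ n ih =>
    have hn1 : (1 : ℕ) ≤ n + 1 := by omega
    rw [Finset.prod_Icc_succ_top hn1, Finset.sum_Icc_succ_top hn1]
    have ih' := ih (fun i hi => h0 i (Finset.Icc_subset_Icc_right (by omega) hi))
      (fun m hm => by
        refine hind m ?_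
        simp only [Finset.mem_Icc] at hm ⊢; omega)
    rw [ih']
    apply key_mul
    intro a ha b hb a' ha' b' hb' h
    rcases Nat.eq_zero_or_pos n with rfl | hnpos
    · rw [Finset.Icc_eq_empty_of_lt Nat.zero_lt_one, Finset.sum_empty,
        show (0 : Finset ℕ) = {0} from rfl, Finset.mem_singleton] at ha ha'
      subst ha; subst ha'
      omega
    · have hspec := hind (n + 1) (by simp only [Finset.mem_Icc]; omega)
      have hdd : ((b : ℤ) - (b' : ℤ)) ∈
          ((D (n+1)).image (Nat.cast : ℕ → ℤ) - (D (n+1)).image (Nat.cast : ℕ → ℤ)) :=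
        Finset.sub_mem_sub (Finset.mem_image_of_mem _ hb) (Finset.mem_image_of_mem _ hb')
      have hss : ((b : ℤ) - (b' : ℤ)) ∈
          ∑ i ∈ Finset.Icc 1 n,
            ((D i).image (Nat.cast : ℕ → ℤ) - (D i).image (Nat.cast : ℕ → ℤ)) := by
        have hb2 : (b : ℤ) - b' = (a' : ℤ) - a := by
          have := congrArg (Nat.cast : ℕ → ℤ) h
          push_cast at this
          linarith
        rw [hb2]
        apply sub_sum_subset
        refine Finset.sub_mem_sub ?_ ?_
        · rw [← image_cast_sum]; exact Finset.mem_image_of_mem _ ha'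
        · rw [← image_cast_sum]; exact Finset.mem_image_of_mem _ ha
      have : ((b : ℤ) - (b' : ℤ)) ∈ ({0} : Finset ℤ) := by
        rw [show (n + 1) - 1 = n from rfl] at hspec
        rw [← hspec]; exact Finset.mem_inter.mpr ⟨hdd, hss⟩
      simp only [Finset.mem_singleton, sub_eq_zero, Nat.cast_inj] at this
      constructor
      · omega
      · exact this
end

section
/- Let G be a linearly ordered abelian group (written additively) and let A, B, C be finite subsets of {g ∈ G : g ≥ 0} with 0 ∈ A. Assume that the translates A + b (b ∈ B) are pairwise disjoint, the translates A + c (c ∈ C) are pairwise disjoint, (A − A) ∩ (B − B) = {0}, and ⋃_{b∈B}(A + b) = ⋃_{c∈C}(A + c). Then B = C. -/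
open Pointwise

private lemma erase_biUnion_eq {G : Type*} [AddCommGroup G] [LinearOrder G] [IsOrderedAddMonoid G] [DecidableEq G]
    (A D : Finset G) (d0 : G) (hd0 : d0 ∈ D)
    (hdisj : ∀ d ∈ D, ∀ d' ∈ D, d ≠ d' → Disjoint (A.image (· + d)) (A.image (· + d'))) :
    (D.erase d0).biUnion (fun d => A.image (· + d)) =
      D.biUnion (fun d => A.image (· + d)) \ (A.image (· + d0)) := by
  ext x
  simp only [Finset.mem_biUnion, Finset.mem_sdiff, Finset.mem_erase]
  constructor
  · rintro ⟨d, ⟨hne, hd⟩, hx⟩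
    exact ⟨⟨d, hd, hx⟩, fun hx0 => Finset.disjoint_left.mp (hdisj d hd d0 hd0 hne) hx hx0⟩
  · rintro ⟨⟨d, hd, hx⟩, hx0⟩
    exact ⟨d, ⟨fun h => hx0 (h ▸ hx), hd⟩, hx⟩

private lemma stmt3_aux {G : Type*} [AddCommGroup G] [LinearOrder G] [IsOrderedAddMonoid G] [DecidableEq G] :
    ∀ n (A B C : Finset G), B.card ≤ n →
    (0 : G) ∈ A → (∀ a ∈ A, 0 ≤ a) → (∀ b ∈ B, 0 ≤ b) →
    (∀ b ∈ B, ∀ b' ∈ B, b ≠ b' → Disjoint (A.image (· + b)) (A.image (· + b'))) →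
    (∀ c ∈ C, ∀ c' ∈ C, c ≠ c' → Disjoint (A.image (· + c)) (A.image (· + c'))) →
    B.biUnion (fun b => A.image (· + b)) = C.biUnion (fun c => A.image (· + c)) →
    B = C := by
  intro n
  induction n with
  | zero =>
    intro A B C hcard hA0 _ _ _ _ hunion
    have hB : B = ∅ := Finset.card_eq_zero.mp (Nat.le_zero.mp hcard)
    subst hB
    by_contra h
    obtain ⟨c, hc⟩ := Finset.nonempty_iff_ne_empty.mpr (fun h' => h h'.symm)
    have : c ∈ C.biUnion (fun c => A.image (· + c)) :=
      Finset.mem_biUnion.mpr ⟨c, hc, Finset.mem_image.mpr ⟨0, hA0, zero_add c⟩⟩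
    rw [← hunion] at this
    simp at this
  | succ n ih =>
    intro A B C hcard hA0 hApos hBpos hBdisj hCdisj hunion
    rcases B.eq_empty_or_nonempty with hB | hB
    · subst hB
      by_contra h
      obtain ⟨c, hc⟩ := Finset.nonempty_iff_ne_empty.mpr (fun h' => h h'.symm)
      have : c ∈ C.biUnion (fun c => A.image (· + c)) :=
        Finset.mem_biUnion.mpr ⟨c, hc, Finset.mem_image.mpr ⟨0, hA0, zero_add c⟩⟩
      rw [← hunion] at this
      simp at this
    · set b0 := B.min' hB with hb0def
      have hb0B : b0 ∈ B := B.min'_mem hB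
      -- b0 ∈ C
      have hb0S : b0 ∈ B.biUnion (fun b => A.image (· + b)) :=
        Finset.mem_biUnion.mpr ⟨b0, hb0B, Finset.mem_image.mpr ⟨0, hA0, zero_add b0⟩⟩
      rw [hunion] at hb0S
      obtain ⟨c, hcC, hc⟩ := Finset.mem_biUnion.mp hb0S
      obtain ⟨a, haA, hac⟩ := Finset.mem_image.mp hc
      have hcle : c ≤ b0 := hac ▸ le_add_of_nonneg_left (hApos a haA)
      have hcS : c ∈ B.biUnion (fun b => A.image (· + b)) := by
        rw [hunion]
        exact Finset.mem_biUnion.mpr ⟨c, hcC, Finset.mem_image.mpr ⟨0, hA0, zero_add c⟩⟩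
      obtain ⟨b, hbB, hb⟩ := Finset.mem_biUnion.mp hcS
      obtain ⟨a', ha'A, ha'b⟩ := Finset.mem_image.mp hb
      have hble : b0 ≤ c :=
        (B.min'_le b hbB).trans (ha'b ▸ le_add_of_nonneg_left (hApos a' ha'A))
      have hceq : c = b0 := le_antisymm hcle hble
      have hb0C : b0 ∈ C := hceq ▸ hcC
      -- erase and recurse
      have hEB := erase_biUnion_eq A B b0 hb0B hBdisj
      have hEC := erase_biUnion_eq A C b0 hb0C hCdisj
      have hunion' : (B.erase b0).biUnion (fun b => A.image (· + b)) =
          (C.erase b0).biUnion (fun c => A.image (· + c)) := by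
        rw [hEB, hEC, hunion]
      have hcard' : (B.erase b0).card ≤ n := by
        have := Finset.card_erase_of_mem hb0B
        omega
      have hrec := ih A (B.erase b0) (C.erase b0) hcard' hA0 hApos
        (fun b hb => hBpos b (Finset.mem_of_mem_erase hb))
        (fun b hb b' hb' hne => hBdisj b (Finset.mem_of_mem_erase hb) b'
          (Finset.mem_of_mem_erase hb') hne)
        (fun c hc c' hc' hne => hCdisj c (Finset.mem_of_mem_erase hc) c'
          (Finset.mem_of_mem_erase hc') hne)
        hunion'
      have := congrArg (insert b0) hrec
      rwa [Finset.insert_erase hb0B, Finset.insert_erase hb0C] at this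

theorem stmt3 {G : Type*} [AddCommGroup G] [LinearOrder G] [IsOrderedAddMonoid G] [DecidableEq G]
    (A B C : Finset G)
    (hA0 : (0 : G) ∈ A)
    (hApos : ∀ a ∈ A, 0 ≤ a) (hBpos : ∀ b ∈ B, 0 ≤ b) (hCpos : ∀ c ∈ C, 0 ≤ c)
    (hBdisj : ∀ b ∈ B, ∀ b' ∈ B, b ≠ b' →
      Disjoint (A.image (· + b)) (A.image (· + b')))
    (hCdisj : ∀ c ∈ C, ∀ c' ∈ C, c ≠ c' →
      Disjoint (A.image (· + c)) (A.image (· + c')))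
    (hAB : (A - A) ∩ (B - B) = {0})
    (hunion : B.biUnion (fun b => A.image (· + b)) =
      C.biUnion (fun c => A.image (· + c))) :
    B = C :=
  stmt3_aux B.card A B C le_rfl hA0 hApos hBpos hBdisj hCdisj hunion
end

section
/- Let (C_n)_{n≥1}, (F_n)_{n≥0} and (C'_n)_{n≥1}, (F'_n)_{n≥0} be two pairs of sequences of finite subsets of ℤ, each pair satisfying conditions (I)–(III) and (1-3), and assume C_n ⊆ ℕ and C'_n ⊆ ℕ for all n ≥ 1. Write Σ_{i>k}C_i := ⋃_{m>k}(C_{k+1} + C_{k+2} + ⋯ + C_m), and similarly for the primed sequence. Suppose there exist an integer r > 0 and a subset R ⊆ F'_r ∩ ℕ such that Σ_{i>0}C_i = R + Σ_{i>r}C'_i. Then there exist an increasing sequence of integers 0 = l_0 < l'_1 < l_1 < l'_2 < l_2 < ⋯ and finite subsets A_n ⊆ F'_{l'_n} ∩ ℕ and B_n ⊆ F_{l_n} ∩ ℕ with 0 ∈ A_n ∩ B_n such that, for every n ≥ 1: Σ_{i>l_{n−1}}C_i = A_n + Σ_{i>l'_n}C'_i; Σ_{i>l'_n}C'_i = B_n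 + Σ_{i>l_n}C_i; F'_{l'_n} + B_n ⊆ F_{l_n}; F_{l_n} + A_{n+1} ⊆ F'_{l'_{n+1}}; (F'_{l'_n} − F'_{l'_n}) ∩ (B_n − B_n) = {0}; and (F_{l_n} − F_{l_n}) ∩ (A_{n+1} − A_{n+1}) = {0}. -/
open Pointwise

/-- `tailSum C k` is the set Σ_{i>k} C_i = ⋃_{m>k} (C_{k+1} + ⋯ + C_m) ⊆ ℤ. -/
def tailSum (C : ℕ → Finset ℤ) (k : ℕ) : Set ℤ :=
  ⋃ m ∈ Set.Ioi k, ((∑ i ∈ Finset.Icc (k + 1) m, C i : Finset ℤ) : Set ℤ)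

namespace Stmt4Aux

lemma mem_tailSum {C : ℕ → Finset ℤ} {k : ℕ} {x : ℤ} :
    x ∈ tailSum C k ↔ ∃ m, k < m ∧ x ∈ (∑ i ∈ Finset.Icc (k + 1) m, C i : Finset ℤ) := by
  simp only [tailSum, Set.mem_iUnion, Set.mem_Ioi, Finset.mem_coe, exists_prop]

lemma zero_mem_fsum {s : Finset ℕ} {f : ℕ → Finset ℤ} (h : ∀ i ∈ s, (0:ℤ) ∈ f i) :
    (0:ℤ) ∈ ∑ i ∈ s, f i := by
  classical
  induction s using Finset.induction_on with
  | empty => simp [Finset.mem_zero]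
  | @insert a s ha ih =>
      rw [Finset.sum_insert ha]
      exact Finset.mem_add.mpr ⟨0, h a (Finset.mem_insert_self a s), 0,
        ih (fun i hi => h i (Finset.mem_insert_of_mem hi)), by ring⟩

lemma fsum_nonneg {s : Finset ℕ} {f : ℕ → Finset ℤ}
    (h : ∀ i ∈ s, ∀ x ∈ f i, (0:ℤ) ≤ x) : ∀ x ∈ ∑ i ∈ s, f i, (0:ℤ) ≤ x := by
  classical
  induction s using Finset.induction_on with
  | empty =>
      intro x hx
      rw [Finset.sum_empty, Finset.mem_zero] at hx
      omega
  | @insert a s ha ih =>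
      intro x hx
      rw [Finset.sum_insert ha] at hx
      obtain ⟨y, hy, z, hz, rfl⟩ := Finset.mem_add.mp hx
      have h1 := h a (Finset.mem_insert_self a s) y hy
      have h2 := ih (fun i hi u hu => h i (Finset.mem_insert_of_mem hi) u hu) z hz
      omega

/-- A bundled "(C,F)-system" satisfying (I)–(III), (1-3) and nonnegativity. -/
structure Sys where
  C : ℕ → Finset ℤ
  F : ℕ → Finset ℤ
  hF0 : (0:ℤ) ∈ F 0
  hC0 : ∀ n, (0:ℤ) ∈ C (n + 1)
  hII : ∀ n, F n + C (n + 1) ⊆ F (n + 1)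
  hIII : ∀ n, ∀ c ∈ C (n + 1), ∀ c' ∈ C (n + 1), c ≠ c' →
    Disjoint ((F n).image (· + c)) ((F n).image (· + c'))
  h13 : ∀ g : ℤ, ∀ n : ℕ, ∃ m, n < m ∧
    ({g} : Finset ℤ) + F n + ∑ i ∈ Finset.Icc (n + 1) m, C i ⊆ F m
  hCpos : ∀ n, ∀ c ∈ C (n + 1), 0 ≤ c

namespace Sys

/-- The block sum `S k m = C_{k+1} + ⋯ + C_m`. -/
def S (Γ : Sys) (k m : ℕ) : Finset ℤ := ∑ i ∈ Finset.Icc (k + 1) m, Γ.C i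

lemma mem_tail {Γ : Sys} {k : ℕ} {x : ℤ} :
    x ∈ tailSum Γ.C k ↔ ∃ m, k < m ∧ x ∈ Γ.S k m := mem_tailSum

lemma zero_mem_C (Γ : Sys) {i : ℕ} (hi : 1 ≤ i) : (0:ℤ) ∈ Γ.C i := by
  cases i with
  | zero => omega
  | succ j => exact Γ.hC0 j

lemma C_nonneg (Γ : Sys) {i : ℕ} (hi : 1 ≤ i) : ∀ c ∈ Γ.C i, (0:ℤ) ≤ c := by
  cases i with
  | zero => omega
  | succ j => exact Γ.hCpos j

lemma zero_mem_F (Γ : Sys) (n : ℕ) : (0:ℤ) ∈ Γ.F n := by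
  induction n with
  | zero => exact Γ.hF0
  | succ n ih =>
      exact Γ.hII n (Finset.mem_add.mpr ⟨0, ih, 0, Γ.hC0 n, by ring⟩)

lemma zero_mem_S (Γ : Sys) (k m : ℕ) : (0:ℤ) ∈ Γ.S k m :=
  zero_mem_fsum (fun i hi => Γ.zero_mem_C (by have := (Finset.mem_Icc.mp hi).1; omega))

lemma S_nonneg (Γ : Sys) {k m : ℕ} {x : ℤ} (hx : x ∈ Γ.S k m) : (0:ℤ) ≤ x :=
  fsum_nonneg (fun i hi => Γ.C_nonneg (by have := (Finset.mem_Icc.mp hi).1; omega)) x hx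

lemma S_self (Γ : Sys) (k : ℕ) : Γ.S k k = 0 := by
  unfold S
  rw [Finset.Icc_eq_empty (by omega), Finset.sum_empty]

lemma S_succ (Γ : Sys) {k m : ℕ} (h : k ≤ m) :
    Γ.S k (m + 1) = Γ.S k m + Γ.C (m + 1) := by
  unfold S
  exact Finset.sum_Icc_succ_top (by omega) _

lemma S_split (Γ : Sys) {k m M : ℕ} (h1 : k ≤ m) (h2 : m ≤ M) :
    Γ.S k m + Γ.S m M = Γ.S k M := by
  induction M, h2 using Nat.le_induction with
  | base => rw [S_self, add_zero]
  | succ M hM ih =>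
      rw [Γ.S_succ (le_trans h1 hM), Γ.S_succ hM, ← add_assoc, ih]

lemma S_mono (Γ : Sys) {k m M : ℕ} (h1 : k ≤ m) (h2 : m ≤ M) : Γ.S k m ⊆ Γ.S k M := by
  intro x hx
  rw [← Γ.S_split h1 h2]
  exact Finset.mem_add.mpr ⟨x, hx, 0, Γ.zero_mem_S m M, add_zero x⟩

lemma F_add_S (Γ : Sys) {k m : ℕ} (h : k ≤ m) : Γ.F k + Γ.S k m ⊆ Γ.F m := by
  induction m, h using Nat.le_induction with
  | base => rw [S_self, add_zero]
  | succ m hm ih =>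
      rw [Γ.S_succ hm, ← add_assoc]
      calc Γ.F k + Γ.S k m + Γ.C (m + 1)
          ⊆ Γ.F m + Γ.C (m + 1) := Finset.add_subset_add_right ih
        _ ⊆ Γ.F (m + 1) := Γ.hII m

lemma S_subset_F (Γ : Sys) {k m : ℕ} (h : k ≤ m) : Γ.S k m ⊆ Γ.F m := by
  intro x hx
  exact Γ.F_add_S h (Finset.mem_add.mpr ⟨0, Γ.zero_mem_F k, x, hx, zero_add x⟩)

lemma F_mono (Γ : Sys) {k m : ℕ} (h : k ≤ m) : Γ.F k ⊆ Γ.F m := by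
  intro x hx
  exact Γ.F_add_S h (Finset.mem_add.mpr ⟨x, hx, 0, Γ.zero_mem_S k m, add_zero x⟩)

lemma zero_mem_tail (Γ : Sys) (k : ℕ) : (0:ℤ) ∈ tailSum Γ.C k :=
  mem_tail.mpr ⟨k + 1, by omega, Γ.zero_mem_S k (k + 1)⟩

lemma tail_nonneg (Γ : Sys) {k : ℕ} {x : ℤ} (hx : x ∈ tailSum Γ.C k) : (0:ℤ) ≤ x := by
  obtain ⟨m, hm, hx⟩ := mem_tail.mp hx
  exact Γ.S_nonneg hx

lemma S_subset_tail (Γ : Sys) {k m : ℕ} (h : k < m) {x : ℤ} (hx : x ∈ Γ.S k m) :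
    x ∈ tailSum Γ.C k := mem_tail.mpr ⟨m, h, hx⟩

/-- tail C k = S k m + tail C m (as sets), for k ≤ m. -/
lemma tail_decomp (Γ : Sys) {k m : ℕ} (h : k ≤ m) :
    tailSum Γ.C k = ↑(Γ.S k m) + tailSum Γ.C m := by
  ext x
  constructor
  · intro hx
    obtain ⟨M, hM, hxM⟩ := mem_tail.mp hx
    rcases le_or_gt M m with hMm | hMm
    · exact Set.mem_add.mpr ⟨x, Finset.mem_coe.mpr (Γ.S_mono (by omega) hMm hxM),
        0, Γ.zero_mem_tail m, add_zero x⟩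
    · rw [← Γ.S_split h (le_of_lt hMm)] at hxM
      obtain ⟨s, hs, t, ht, rfl⟩ := Finset.mem_add.mp hxM
      exact Set.mem_add.mpr ⟨s, Finset.mem_coe.mpr hs, t, Γ.S_subset_tail hMm ht, rfl⟩
  · intro hx
    obtain ⟨s, hs, t, ht, rfl⟩ := Set.mem_add.mp hx
    obtain ⟨M, hM, htM⟩ := mem_tail.mp ht
    refine mem_tail.mpr ⟨M, by omega, ?_⟩
    rw [← Γ.S_split h (by omega)]
    exact Finset.mem_add.mpr ⟨s, Finset.mem_coe.mp hs, t, htM, rfl⟩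

/-- Separation / unique decomposition at block level (uses (III)). -/
lemma sep_block (Γ : Sys) (k : ℕ) :
    ∀ M, k ≤ M → ∀ f ∈ Γ.F k, ∀ f' ∈ Γ.F k, ∀ t ∈ Γ.S k M, ∀ t' ∈ Γ.S k M,
      f + t = f' + t' → f = f' := by
  intro M hM
  induction M, hM using Nat.le_induction with
  | base =>
      intro f hf f' hf' t ht t' ht' h
      rw [S_self] at ht ht'
      rw [Finset.mem_zero] at ht ht'
      omega
  | succ M hM ih =>
      intro f hf f' hf' t ht t' ht' h
      rw [Γ.S_succ hM] at ht ht'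
      obtain ⟨u, hu, c, hc, rfl⟩ := Finset.mem_add.mp ht
      obtain ⟨u', hu', c', hc', rfl⟩ := Finset.mem_add.mp ht'
      by_cases hcc : c = c'
      · subst hcc
        exact ih f hf f' hf' u hu u' hu' (by omega)
      · exfalso
        have hfu : f + u ∈ Γ.F M :=
          Γ.F_add_S hM (Finset.mem_add.mpr ⟨f, hf, u, hu, rfl⟩)
        have hfu' : f' + u' ∈ Γ.F M :=
          Γ.F_add_S hM (Finset.mem_add.mpr ⟨f', hf', u', hu', rfl⟩)
        have h1 : (f + u) + c ∈ (Γ.F M).image (· + c) :=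
          Finset.mem_image.mpr ⟨f + u, hfu, rfl⟩
        have h2 : (f + u) + c ∈ (Γ.F M).image (· + c') := by
          have : (f + u) + c = (f' + u') + c' := by omega
          rw [this]
          exact Finset.mem_image.mpr ⟨f' + u', hfu', rfl⟩
        exact Finset.disjoint_left.mp (Γ.hIII M c hc c' hc' hcc) h1 h2

/-- Separation with tails: elements of `F k + tail C k` decompose uniquely. -/
lemma sep_tail (Γ : Sys) (k : ℕ) {f f' t t' : ℤ}
    (hf : f ∈ Γ.F k) (hf' : f' ∈ Γ.F k)
    (ht : t ∈ tailSum Γ.C k) (ht' : t' ∈ tailSum Γ.C k)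
    (h : f + t = f' + t') : f = f' ∧ t = t' := by
  obtain ⟨M1, hM1, htM1⟩ := mem_tail.mp ht
  obtain ⟨M2, hM2, htM2⟩ := mem_tail.mp ht'
  have h1 : t ∈ Γ.S k (max M1 M2) := Γ.S_mono (by omega) (le_max_left _ _) htM1
  have h2 : t' ∈ Γ.S k (max M1 M2) := Γ.S_mono (by omega) (le_max_right _ _) htM2
  have := Γ.sep_block k (max M1 M2) (by omega) f hf f' hf' t h1 t' h2 h
  exact ⟨this, by omega⟩

/-- Monotone absorption for a single g (from (1-3)). -/
lemma absorb_one (Γ : Sys) (g : ℤ) (n : ℕ) :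
    ∃ m₁, n < m₁ ∧ ∀ m, m₁ ≤ m → ∀ f ∈ Γ.F n, ∀ s ∈ Γ.S n m, g + f + s ∈ Γ.F m := by
  obtain ⟨m₁, hm₁, hsub⟩ := Γ.h13 g n
  refine ⟨m₁, hm₁, ?_⟩
  intro m hm f hf s hs
  rw [← Γ.S_split (le_of_lt hm₁) hm] at hs
  obtain ⟨s₁, hs₁, s₂, hs₂, rfl⟩ := Finset.mem_add.mp hs
  have h1 : g + f + s₁ ∈ Γ.F m₁ := by
    apply hsub
    exact Finset.mem_add.mpr ⟨g + f,
      Finset.mem_add.mpr ⟨g, Finset.mem_singleton_self g, f, hf, rfl⟩, s₁, hs₁, rfl⟩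
  have h2 : (g + f + s₁) + s₂ ∈ Γ.F m :=
    Γ.F_add_S hm (Finset.mem_add.mpr ⟨g + f + s₁, h1, s₂, hs₂, rfl⟩)
  rw [← add_assoc]
  exact h2

/-- Monotone absorption for a finite set of g's. -/
lemma absorb (Γ : Sys) (G : Finset ℤ) (n : ℕ) :
    ∃ m₀, n < m₀ ∧ ∀ m, m₀ ≤ m → ∀ g ∈ G, ∀ f ∈ Γ.F n, ∀ s ∈ Γ.S n m,
      g + f + s ∈ Γ.F m := by
  classical
  choose t ht1 ht2 using fun g => Γ.absorb_one g n
  refine ⟨max (n + 1) (G.sup t), by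
    have := le_max_left (n + 1) (G.sup t); omega, ?_⟩
  intro m hm g hg f hf s hs
  have h1 : t g ≤ m := by
    have := Finset.le_sup (f := t) hg
    have := le_max_right (n + 1) (G.sup t)
    omega
  exact ht2 g m h1 f hf s hs

end Sys

open Sys

/-- THE SWAP LEMMA: from `tail Γ k = A + tail Δ k'` produce `m` and `B` with
`tail Δ k' = B + tail Γ m` and all side conditions. -/
lemma swap (Γ Δ : Sys) (k k' : ℕ) (A : Finset ℤ)
    (hAF : A ⊆ Δ.F k') (hA0 : (0:ℤ) ∈ A) (hApos : ∀ x ∈ A, (0:ℤ) ≤ x)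
    (heq : tailSum Γ.C k = ↑A + tailSum Δ.C k') (LB : ℕ) :
    ∃ m B, LB < m ∧ k' < m ∧
      B ⊆ Γ.F m ∧ (∀ x ∈ B, (0:ℤ) ≤ x) ∧ (0:ℤ) ∈ B ∧
      tailSum Δ.C k' = ↑B + tailSum Γ.C m ∧
      Δ.F k' + B ⊆ Γ.F m ∧
      (Δ.F k' - Δ.F k') ∩ (B - B) = {0} := by
  classical
  obtain ⟨m₀, hm₀n, habs⟩ := Γ.absorb (Δ.F k') k
  set m : ℕ := max m₀ (max LB (max k k') + 1) with hmdef
  have hm₀m : m₀ ≤ m := le_max_left _ _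
  have hbig : max LB (max k k') + 1 ≤ m := le_max_right _ _
  have hLB : LB < m := by
    have := le_max_left LB (max k k'); omega
  have hkm : k < m := by
    have := le_max_right LB (max k k'); have := le_max_left k k'; omega
  have hk'm : k' < m := by
    have := le_max_right LB (max k k'); have := le_max_right k k'; omega
  -- absorption specialized
  have abs : ∀ g ∈ Δ.F k', ∀ s ∈ Γ.S k m, g + s ∈ Γ.F m := by
    intro g hg s hs
    have := habs m hm₀m g hg 0 (Γ.zero_mem_F k) s hs
    rwa [add_zero] at this
  have Ysub : tailSum Δ.C k' ⊆ tailSum Γ.C k := by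
    intro y hy
    rw [heq]
    exact Set.mem_add.mpr ⟨0, Finset.mem_coe.mpr hA0, y, hy, zero_add y⟩
  have decompAY : ∀ x ∈ tailSum Γ.C k, ∃ a ∈ A, ∃ y ∈ tailSum Δ.C k', x = a + y := by
    intro x hx
    rw [heq] at hx
    obtain ⟨a, ha, y, hy, h⟩ := Set.mem_add.mp hx
    exact ⟨a, Finset.mem_coe.mp ha, y, hy, h.symm⟩
  have decompX : ∀ x ∈ tailSum Γ.C k, ∃ s ∈ Γ.S k m, ∃ t ∈ tailSum Γ.C m, x = s + t := by
    intro x hx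
    rw [Γ.tail_decomp (le_of_lt hkm)] at hx
    obtain ⟨s, hs, t, ht, h⟩ := Set.mem_add.mp hx
    exact ⟨s, Finset.mem_coe.mp hs, t, ht, h.symm⟩
  have memX_of : ∀ {s t : ℤ}, s ∈ Γ.S k m → t ∈ tailSum Γ.C m → s + t ∈ tailSum Γ.C k := by
    intro s t hs ht
    rw [Γ.tail_decomp (le_of_lt hkm)]
    exact Set.mem_add.mpr ⟨s, Finset.mem_coe.mpr hs, t, ht, rfl⟩
  have uniq : ∀ a ∈ A, ∀ a' ∈ A, ∀ y ∈ tailSum Δ.C k', ∀ y' ∈ tailSum Δ.C k', a + y = a' + y' → a = a' ∧ y = y' := by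
    intro a ha a' ha' y hy y' hy' h
    exact Δ.sep_tail k' (hAF ha) (hAF ha') hy hy' h
  -- the Y-part of a block element is a block element
  have delta : ∀ x ∈ Γ.S k m, ∀ a ∈ A, ∀ w ∈ tailSum Δ.C k', (x:ℤ) = a + w → w ∈ Γ.S k m := by
    intro x hx a ha w hw hdec
    obtain ⟨sw, hsw, tw, htw, hwdec⟩ := decompX w (Ysub hw)
    have hfm : a + sw ∈ Γ.F m := abs a (hAF ha) sw hsw
    have hxF : x ∈ Γ.F m := Γ.S_subset_F (le_of_lt hkm) hx
    have heq2 : (a + sw) + tw = x + 0 := by rw [hdec, hwdec]; ring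
    obtain ⟨h1, h2⟩ := Γ.sep_tail m hfm hxF htw (Γ.zero_mem_tail m) heq2
    rw [hwdec, h2, add_zero]
    exact hsw
  -- main double claim by strong induction on size
  have script : ∀ σ : ℤ, σ ∈ Γ.S k m →
      (∀ σ' : ℤ, σ' ∈ Γ.S k m → σ'.toNat < σ.toNat →
        ((∃ t ∈ tailSum Γ.C m, σ' + t ∈ tailSum Δ.C k') → σ' ∈ tailSum Δ.C k') ∧
        (σ' ∈ tailSum Δ.C k' → ∀ t ∈ tailSum Γ.C m, σ' + t ∈ tailSum Δ.C k')) →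
      ((∃ t ∈ tailSum Γ.C m, σ + t ∈ tailSum Δ.C k') → σ ∈ tailSum Δ.C k') ∧
      (σ ∈ tailSum Δ.C k' → ∀ t ∈ tailSum Γ.C m, σ + t ∈ tailSum Δ.C k') := by
    intro σ hσS IH
    constructor
    · rintro ⟨t, htm, hty⟩
      have hσX : σ ∈ tailSum Γ.C k := Γ.S_subset_tail hkm hσS
      obtain ⟨a, haA, w, hwY, hdec⟩ := decompAY σ hσX
      by_cases ha : a = 0
      · rw [ha, zero_add] at hdec
        rw [hdec]; exact hwY
      · exfalso
        have hapos : 0 < a := lt_of_le_of_ne (hApos a haA) (Ne.symm ha)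
        have hwS : w ∈ Γ.S k m := delta σ hσS a haA w hwY hdec
        have hw0 : (0:ℤ) ≤ w := Δ.tail_nonneg hwY
        have hlt : w.toNat < σ.toNat := by omega
        have hwt : w + t ∈ tailSum Δ.C k' := (IH w hwS hlt).2 hwY t htm
        have heq0 : a + (w + t) = 0 + (σ + t) := by rw [hdec]; ring
        exact ha (uniq a haA 0 hA0 (w + t) hwt (σ + t) hty heq0).1
    · intro hσY t htm
      have hzX : σ + t ∈ tailSum Γ.C k := memX_of hσS htm
      obtain ⟨a, haA, y, hyY, hdec⟩ := decompAY _ hzX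
      by_cases ha : a = 0
      · rw [ha, zero_add] at hdec
        rw [← hdec] at hyY; exact hyY
      · exfalso
        have hapos : 0 < a := lt_of_le_of_ne (hApos a haA) (Ne.symm ha)
        obtain ⟨s', hs'S, t', ht'm, hydec⟩ := decompX y (Ysub hyY)
        have hfm : a + s' ∈ Γ.F m := abs a (hAF haA) s' hs'S
        have hσF : σ ∈ Γ.F m := Γ.S_subset_F (le_of_lt hkm) hσS
        have heq2 : (a + s') + t' = σ + t := by rw [hdec, hydec]; ring
        obtain ⟨hf, htt⟩ := Γ.sep_tail m hfm hσF ht'm htm heq2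
        have hs'0 : (0:ℤ) ≤ s' := Γ.S_nonneg hs'S
        have hlt : s'.toNat < σ.toNat := by omega
        have hs'Y : s' ∈ tailSum Δ.C k' := by
          refine ((IH s' hs'S hlt).1) ⟨t, htm, ?_⟩
          rw [← htt, ← hydec]; exact hyY
        have heq3 : a + s' = 0 + σ := by omega
        exact ha (uniq a haA 0 hA0 s' hs'Y σ hσY heq3).1
  have KEY : ∀ σ : ℤ, σ ∈ Γ.S k m →
      ((∃ t ∈ tailSum Γ.C m, σ + t ∈ tailSum Δ.C k') → σ ∈ tailSum Δ.C k') ∧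
      (σ ∈ tailSum Δ.C k' → ∀ t ∈ tailSum Γ.C m, σ + t ∈ tailSum Δ.C k') := by
    have H : ∀ N : ℕ, ∀ σ : ℤ, σ ∈ Γ.S k m → σ.toNat ≤ N →
        ((∃ t ∈ tailSum Γ.C m, σ + t ∈ tailSum Δ.C k') → σ ∈ tailSum Δ.C k') ∧
        (σ ∈ tailSum Δ.C k' → ∀ t ∈ tailSum Γ.C m, σ + t ∈ tailSum Δ.C k') := by
      intro N
      induction N with
      | zero =>
          intro σ hσ hN
          exact script σ hσ (fun σ' hσ' hlt => absurd hlt (by omega))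
      | succ N ihN =>
          intro σ hσ hN
          exact script σ hσ (fun σ' hσ' hlt => ihN σ' hσ' (by omega))
    exact fun σ hσ => H σ.toNat σ hσ le_rfl
  -- define B
  set B : Finset ℤ := (Γ.S k m).filter (fun x => x ∈ tailSum Δ.C k') with hB
  have hBS : ∀ b ∈ B, b ∈ Γ.S k m := fun b hb => (Finset.mem_filter.mp hb).1
  have hBY : ∀ b ∈ B, b ∈ tailSum Δ.C k' := fun b hb => (Finset.mem_filter.mp hb).2
  have hYeq : tailSum Δ.C k' = ↑B + tailSum Γ.C m := by
    ext x
    constructor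
    · intro hx
      obtain ⟨s, hs, t, ht, rfl⟩ := decompX x (Ysub hx)
      have hsY : s ∈ tailSum Δ.C k' := (KEY s hs).1 ⟨t, ht, hx⟩
      exact Set.mem_add.mpr ⟨s, Finset.mem_coe.mpr (Finset.mem_filter.mpr ⟨hs, hsY⟩),
        t, ht, rfl⟩
    · intro hx
      obtain ⟨b, hb, t, ht, rfl⟩ := Set.mem_add.mp hx
      have hb' := Finset.mem_coe.mp hb
      exact (KEY b (hBS b hb')).2 (hBY b hb') t ht
  refine ⟨m, B, hLB, hk'm, ?_, ?_, ?_, hYeq, ?_, ?_⟩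
  · intro b hb
    exact Γ.S_subset_F (le_of_lt hkm) (hBS b hb)
  · intro b hb
    exact Γ.S_nonneg (hBS b hb)
  · exact Finset.mem_filter.mpr ⟨Γ.zero_mem_S k m, Δ.zero_mem_tail k'⟩
  · intro x hx
    obtain ⟨g, hg, b, hb, rfl⟩ := Finset.mem_add.mp hx
    exact abs g hg b (hBS b hb)
  · ext d
    simp only [Finset.mem_inter, Finset.mem_singleton]
    constructor
    · rintro ⟨h1, h2⟩
      obtain ⟨f, hf, f', hf', hd1⟩ := Finset.mem_sub.mp h1
      obtain ⟨b, hbm, b', hb'm, hd2⟩ := Finset.mem_sub.mp h2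
      have heq4 : f + b' = f' + b := by omega
      have := Δ.sep_tail k' hf hf' (hBY b' hb'm) (hBY b hbm) heq4
      omega
    · rintro rfl
      constructor
      · exact Finset.mem_sub.mpr ⟨0, Δ.zero_mem_F k', 0, Δ.zero_mem_F k', by ring⟩
      · refine Finset.mem_sub.mpr ⟨0, ?_, 0, ?_, by ring⟩ <;>
          exact Finset.mem_filter.mpr ⟨Γ.zero_mem_S k m, Δ.zero_mem_tail k'⟩

/-- The state carried along the construction. -/
structure St (Γ Δ : Sys) where
  k : ℕ
  k' : ℕ
  A : Finset ℤ
  hlt : k < k'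
  hAF : A ⊆ Δ.F k'
  hA0 : (0:ℤ) ∈ A
  hApos : ∀ x ∈ A, (0:ℤ) ≤ x
  heq : tailSum Γ.C k = ↑A + tailSum Δ.C k'

/-- One full step of the construction (two applications of `swap`). -/
structure Step (Γ Δ : Sys) (s : St Γ Δ) where
  B : Finset ℤ
  next : St Γ Δ
  hm : s.k' < next.k
  hB1 : B ⊆ Γ.F next.k
  hB2 : ∀ x ∈ B, (0:ℤ) ≤ x
  hB3 : (0:ℤ) ∈ B
  hB4 : tailSum Δ.C s.k' = ↑B + tailSum Γ.C next.k
  hB5 : Δ.F s.k' + B ⊆ Γ.F next.k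
  hB6 : (Δ.F s.k' - Δ.F s.k') ∩ (B - B) = {0}
  hA5 : Γ.F next.k + next.A ⊆ Δ.F next.k'
  hA6 : (Γ.F next.k - Γ.F next.k) ∩ (next.A - next.A) = {0}

lemma step_nonempty (Γ Δ : Sys) (s : St Γ Δ) : Nonempty (Step Γ Δ s) := by
  obtain ⟨m, B, hm1, hm2, hB1, hB2, hB3, hB4, hB5, hB6⟩ :=
    swap Γ Δ s.k s.k' s.A s.hAF s.hA0 s.hApos s.heq s.k'
  obtain ⟨m', A', hm'1, hm'2, hA1, hA2, hA3, hA4, hA5, hA6⟩ :=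
    swap Δ Γ s.k' m B hB1 hB3 hB2 hB4 m
  exact ⟨{ B := B,
           next := { k := m, k' := m', A := A', hlt := hm'1, hAF := hA1,
                     hA0 := hA3, hApos := hA2, heq := hA4 },
           hm := hm2, hB1 := hB1, hB2 := hB2, hB3 := hB3,
           hB4 := hB4, hB5 := hB5, hB6 := hB6, hA5 := hA5, hA6 := hA6 }⟩

noncomputable def mkStep (Γ Δ : Sys) (s : St Γ Δ) : Step Γ Δ s :=
  Classical.choice (step_nonempty Γ Δ s)

noncomputable def seqSt (Γ Δ : Sys) (s₀ : St Γ Δ) : ℕ → St Γ Δ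
  | 0 => s₀
  | n + 1 => (mkStep Γ Δ (seqSt Γ Δ s₀ n)).next

end Stmt4Aux

open Stmt4Aux in
/- STATEMENT 4: Theorem 2.7, "if" direction unfolded.  Here the sequences are
indexed so that `C (n+1)` is C_{n+1} (n ≥ 0) and `F n` is F_n; conditions
(I)–(III) and (1-3) are stated for every n. -/
theorem stmt4 (C F C' F' : ℕ → Finset ℤ)
    (hI : (0 : ℤ) ∈ F 0 ∧ ∀ n, (0 : ℤ) ∈ C (n + 1) ∧ 1 < (C (n + 1)).card)
    (hII : ∀ n, F n + C (n + 1) ⊆ F (n + 1))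
    (hIII : ∀ n, ∀ c ∈ C (n + 1), ∀ c' ∈ C (n + 1), c ≠ c' →
      Disjoint ((F n).image (· + c)) ((F n).image (· + c')))
    (h13 : ∀ g : ℤ, ∀ n : ℕ, ∃ m, n < m ∧
      ({g} : Finset ℤ) + F n + ∑ i ∈ Finset.Icc (n + 1) m, C i ⊆ F m)
    (hI' : (0 : ℤ) ∈ F' 0 ∧ ∀ n, (0 : ℤ) ∈ C' (n + 1) ∧ 1 < (C' (n + 1)).card)
    (hII' : ∀ n, F' n + C' (n + 1) ⊆ F' (n + 1))
    (hIII' : ∀ n, ∀ c ∈ C' (n + 1), ∀ c' ∈ C' (n + 1), c ≠ c' →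
      Disjoint ((F' n).image (· + c)) ((F' n).image (· + c')))
    (h13' : ∀ g : ℤ, ∀ n : ℕ, ∃ m, n < m ∧
      ({g} : Finset ℤ) + F' n + ∑ i ∈ Finset.Icc (n + 1) m, C' i ⊆ F' m)
    (hCpos : ∀ n, ∀ c ∈ C (n + 1), 0 ≤ c)
    (hCpos' : ∀ n, ∀ c ∈ C' (n + 1), 0 ≤ c)
    (r : ℕ) (hr : 0 < r) (R : Finset ℤ) (hR : R ⊆ F' r) (hRpos : ∀ x ∈ R, 0 ≤ x)
    (hmain : tailSum C 0 = ↑R + tailSum C' r) :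
    ∃ (l l' : ℕ → ℕ) (A B : ℕ → Finset ℤ),
      l 0 = 0 ∧
      (∀ n, l n < l' (n + 1) ∧ l' (n + 1) < l (n + 1)) ∧
      (∀ n, A (n + 1) ⊆ F' (l' (n + 1)) ∧ (∀ x ∈ A (n + 1), 0 ≤ x) ∧
        (0 : ℤ) ∈ A (n + 1)) ∧
      (∀ n, B (n + 1) ⊆ F (l (n + 1)) ∧ (∀ x ∈ B (n + 1), 0 ≤ x) ∧
        (0 : ℤ) ∈ B (n + 1)) ∧
      (∀ n, tailSum C (l n) = ↑(A (n + 1)) + tailSum C' (l' (n + 1))) ∧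
      (∀ n, tailSum C' (l' (n + 1)) = ↑(B (n + 1)) + tailSum C (l (n + 1))) ∧
      (∀ n, F' (l' (n + 1)) + B (n + 1) ⊆ F (l (n + 1))) ∧
      (∀ n, F (l (n + 1)) + A (n + 2) ⊆ F' (l' (n + 2))) ∧
      (∀ n, (F' (l' (n + 1)) - F' (l' (n + 1))) ∩ (B (n + 1) - B (n + 1)) = {0}) ∧
      (∀ n, (F (l (n + 1)) - F (l (n + 1))) ∩ (A (n + 2) - A (n + 2)) = {0}) := by
  set Γ : Sys := ⟨C, F, hI.1, fun n => (hI.2 n).1, hII, hIII, h13, hCpos⟩ with hΓdef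
  set Δ : Sys := ⟨C', F', hI'.1, fun n => (hI'.2 n).1, hII', hIII', h13', hCpos'⟩ with hΔdef
  have hR0 : (0:ℤ) ∈ R := by
    have h0X : (0:ℤ) ∈ tailSum C 0 := Γ.zero_mem_tail 0
    rw [hmain] at h0X
    obtain ⟨ρ, hρ, v, hv, hsum⟩ := Set.mem_add.mp h0X
    have h1 : (0:ℤ) ≤ ρ := hRpos ρ (Finset.mem_coe.mp hρ)
    have h2 : (0:ℤ) ≤ v := Δ.tail_nonneg hv
    have : ρ = 0 := by omega
    rw [← this]
    exact Finset.mem_coe.mp hρ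
  let s₀ : St Γ Δ := ⟨0, r, R, hr, hR, hR0, hRpos, hmain⟩
  let Sq : ℕ → St Γ Δ := seqSt Γ Δ s₀
  let T : ∀ n, Step Γ Δ (Sq n) := fun n => mkStep Γ Δ (Sq n)
  have hSsucc : ∀ n, Sq (n + 1) = (T n).next := fun n => rfl
  refine ⟨fun n => (Sq n).k,
          fun n => Nat.casesOn n 0 (fun n => (Sq n).k'),
          fun n => Nat.casesOn n ∅ (fun n => (Sq n).A),
          fun n => Nat.casesOn n ∅ (fun n => (T n).B),
          rfl, ?_, ?_, ?_, ?_, ?_, ?_, ?_, ?_, ?_⟩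
  · intro n
    exact ⟨(Sq n).hlt, (T n).hm⟩
  · intro n
    exact ⟨(Sq n).hAF, (Sq n).hApos, (Sq n).hA0⟩
  · intro n
    exact ⟨(T n).hB1, (T n).hB2, (T n).hB3⟩
  · intro n
    exact (Sq n).heq
  · intro n
    exact (T n).hB4
  · intro n
    exact (T n).hB5
  · intro n
    exact (T n).hA5
  · intro n
    exact (T n).hB6
  · intro n
    exact (T n).hA6
end

section
/- Let G be a countable discrete group, let 𝔽 be the set of all finite subsets of G endowed with the discrete topology, and let (𝓕_n)_{n≥0} be a fixed sequence of finite subsets of G. Then the set 𝔉R_1 of all sequences (C_n, F_{n−1})_{n≥1} ∈ (𝔽 × 𝔽)^ℕ such that (F_n)_{n≥0} is a subsequence of (𝓕_n)_{n≥0} and conditions (I)–(III) and (1-3) hold is a Gδ subset of (𝔽 × 𝔽)^ℕ equipped with the product topology. -/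
open Pointwise

/-- Discrete topology on the set 𝔽 of finite subsets of a type. -/
instance finsetDiscreteTopologicalSpace (α : Type*) : TopologicalSpace (Finset α) := ⊥

instance finsetDiscreteTopology (α : Type*) : DiscreteTopology (Finset α) := ⟨rfl⟩

/-- A set of sequences that only depends on the first `n+1` coordinates is open
when the target space is discrete. -/
lemma isOpen_cyl {X : Type*} [TopologicalSpace X] [DiscreteTopology X]
    (n : ℕ) (A : Set (ℕ → X))
    (h : ∀ S T : ℕ → X, (∀ i ≤ n, S i = T i) → S ∈ A → T ∈ A) : IsOpen A := by
  have key : A = (fun S : ℕ → X => fun i : Fin (n + 1) => S i) ⁻¹'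
      ((fun S : ℕ → X => fun i : Fin (n + 1) => S i) '' A) := by
    ext S
    constructor
    · exact fun hS => ⟨S, hS, rfl⟩
    · rintro ⟨T, hT, hπ⟩
      refine h T S (fun i hi => ?_) hT
      exact congrFun hπ ⟨i, Nat.lt_succ_of_le hi⟩
  rw [key]
  exact (continuous_pi fun i : Fin (n + 1) => continuous_apply (i : ℕ)).isOpen_preimage _
    (isOpen_discrete _)

/-- Subsequence condition as a countable intersection of finitary conditions. -/
lemma subseq_iff {α : Type*} (𝓕 : ℕ → α) (F : ℕ → α) :
    (∃ k : ℕ → ℕ, StrictMono k ∧ ∀ n, F n = 𝓕 (k n)) ↔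
      ∀ n, ∃ k : ℕ → ℕ, StrictMonoOn k (Set.Iic n) ∧ ∀ i ≤ n, F i = 𝓕 (k i) := by
  classical
  constructor
  · rintro ⟨k, hk, hfk⟩ n
    exact ⟨k, hk.strictMonoOn _, fun i _ => hfk i⟩
  · intro H
    have Hj : ∀ n, ∃ j, ∃ k : ℕ → ℕ, StrictMonoOn k (Set.Iic n) ∧
        (∀ i ≤ n, F i = 𝓕 (k i)) ∧ k n = j := by
      intro n
      obtain ⟨k, h1, h2⟩ := H n
      exact ⟨k n, k, h1, h2, rfl⟩
    set m : ℕ → ℕ := fun n => Nat.find (Hj n) with hm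
    have hspec : ∀ n, ∃ k : ℕ → ℕ, StrictMonoOn k (Set.Iic n) ∧
        (∀ i ≤ n, F i = 𝓕 (k i)) ∧ k n = m n := fun n => Nat.find_spec (Hj n)
    have hF : ∀ n, F n = 𝓕 (m n) := by
      intro n
      obtain ⟨k, h1, h2, h3⟩ := hspec n
      rw [← h3]; exact h2 n le_rfl
    have hlt : ∀ n, m n < m (n + 1) := by
      intro n
      obtain ⟨k, h1, h2, h3⟩ := hspec (n + 1)
      have hmem : ∃ k' : ℕ → ℕ, StrictMonoOn k' (Set.Iic n) ∧
          (∀ i ≤ n, F i = 𝓕 (k' i)) ∧ k' n = k n :=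
        ⟨k, h1.mono (Set.Iic_subset_Iic.2 (Nat.le_succ n)),
          fun i hi => h2 i (hi.trans (Nat.le_succ n)), rfl⟩
      have h4 : m n ≤ k n := Nat.find_min' (Hj n) hmem
      have h5 : k n < k (n + 1) :=
        h1 (Set.mem_Iic.2 (Nat.le_succ n)) (Set.mem_Iic.2 le_rfl) (Nat.lt_succ_self n)
      omega
    exact ⟨m, strictMono_nat_of_lt_succ hlt, hF⟩

theorem stmt5 {G : Type*} [Group G] [Countable G] [DecidableEq G]
    (𝓕 : ℕ → Finset G) :
    IsGδ {S : ℕ → Finset G × Finset G |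
      (∃ k : ℕ → ℕ, StrictMono k ∧ ∀ n, (S n).2 = 𝓕 (k n)) ∧
      ((1 : G) ∈ (S 0).2 ∧ ∀ n, (1 : G) ∈ (S n).1 ∧ 1 < (S n).1.card) ∧
      (∀ n, (S n).2 * (S n).1 ⊆ (S (n + 1)).2) ∧
      (∀ n, ∀ c ∈ (S n).1, ∀ c' ∈ (S n).1, c ≠ c' →
        Disjoint (((S n).2).image (· * c)) (((S n).2).image (· * c'))) ∧
      (∀ g : G, ∀ n : ℕ, ∃ m, n < m ∧
        ({g} : Finset G) * (S n).2 *
          ((List.range (m - n)).map fun j => (S (n + j)).1).prod ⊆ (S m).2)} := by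
  classical
  simp only [Set.setOf_and]
  refine ((?_ : IsGδ _).inter ((IsGδ.inter ?_ ?_).inter ((?_ : IsGδ _).inter
    ((?_ : IsGδ _).inter ?_))))
  -- subsequence part
  · have : {S : ℕ → Finset G × Finset G |
        ∃ k : ℕ → ℕ, StrictMono k ∧ ∀ n, (S n).2 = 𝓕 (k n)} =
        ⋂ n, {S : ℕ → Finset G × Finset G |
          ∃ k : ℕ → ℕ, StrictMonoOn k (Set.Iic n) ∧ ∀ i ≤ n, (S i).2 = 𝓕 (k i)} := by
      ext S
      simp only [Set.mem_setOf_eq, Set.mem_iInter]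
      exact subseq_iff 𝓕 (fun n => (S n).2)
    rw [this]
    refine .iInter fun n => (isOpen_cyl n _ ?_).isGδ
    rintro S T hST ⟨k, h1, h2⟩
    exact ⟨k, h1, fun i hi => (hST i hi) ▸ h2 i hi⟩
  -- 1 ∈ F₀
  · refine (isOpen_cyl 0 _ ?_).isGδ
    rintro S T hST hS
    simpa [← hST 0 le_rfl] using hS
  -- condition on Cₙ
  · rw [Set.setOf_forall]
    refine .iInter fun n => (isOpen_cyl n _ ?_).isGδ
    rintro S T hST hS
    simpa [← hST n le_rfl] using hS
  -- condition (II)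
  · rw [Set.setOf_forall]
    refine .iInter fun n => (isOpen_cyl (n + 1) _ ?_).isGδ
    rintro S T hST hS
    simpa [← hST n (Nat.le_succ n), ← hST (n + 1) le_rfl] using hS
  -- condition (III)
  · rw [Set.setOf_forall]
    refine .iInter fun n => (isOpen_cyl n _ ?_).isGδ
    rintro S T hST hS
    simpa [← hST n le_rfl] using hS
  -- condition (1-3)
  · rw [Set.setOf_forall]
    refine .iInter fun g => ?_
    rw [Set.setOf_forall]
    refine .iInter fun n => ?_
    have : {S : ℕ → Finset G × Finset G | ∃ m, n < m ∧
        ({g} : Finset G) * (S n).2 *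
          ((List.range (m - n)).map fun j => (S (n + j)).1).prod ⊆ (S m).2} =
        ⋃ m, {S : ℕ → Finset G × Finset G | n < m ∧
          ({g} : Finset G) * (S n).2 *
            ((List.range (m - n)).map fun j => (S (n + j)).1).prod ⊆ (S m).2} := by
      ext S
      simp only [Set.mem_setOf_eq, Set.mem_iUnion]
    rw [this]
    refine (isOpen_iUnion fun m => isOpen_cyl m _ ?_).isGδ
    rintro S T hST ⟨hnm, hsub⟩
    refine ⟨hnm, ?_⟩
    have hlist : ((List.range (m - n)).map fun j => (T (n + j)).1) =
        ((List.range (m - n)).map fun j => (S (n + j)).1) := by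
      refine List.map_congr_left fun j hj => ?_
      have hj' : j < m - n := List.mem_range.1 hj
      rw [← hST (n + j) (by omega)]
    rw [← hST n hnm.le, ← hST m le_rfl, hlist]
    exact hsub
end

section
/- Let G be a group and let H ⊆ G be a finite subset that tiles G, i.e., there is a subset 𝓒 ⊆ G such that G = ⋃_{c∈𝓒} Hc and Hc ∩ Hc' = ∅ for all distinct c, c' ∈ 𝓒. Let F ⊆ G be finite, and put F° := {f ∈ F : HH^{−1}f ⊆ F} and C := {c ∈ 𝓒 : F° ∩ Hc ≠ ∅}. Then F° ⊆ HC ⊆ F; in particular, #F° ≤ #C · #H ≤ #F. -/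
open Pointwise

/- STATEMENT 6: if a finite set H tiles the group G with tiling centers 𝓒, F is finite,
F° := {f ∈ F : HH⁻¹f ⊆ F} and C := {c ∈ 𝓒 : F° ∩ Hc ≠ ∅}, then F° ⊆ HC ⊆ F; in
particular #F° ≤ #C·#H ≤ #F. -/
theorem stmt6 {G : Type*} [Group G] [DecidableEq G]
    (H : Finset G) (𝓒 : Set G)
    (hcover : ∀ x : G, ∃ c ∈ 𝓒, ∃ h ∈ H, h * c = x)
    (hdisj : ∀ c ∈ 𝓒, ∀ c' ∈ 𝓒, c ≠ c' →
      Disjoint (H.image (· * c)) (H.image (· * c')))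
    (F F₀ : Finset G)
    (hF₀ : ∀ f : G, f ∈ F₀ ↔ f ∈ F ∧ ∀ h ∈ H, ∀ h' ∈ H, h * h'⁻¹ * f ∈ F)
    (C : Set G)
    (hC : C = {c | c ∈ 𝓒 ∧ ∃ h ∈ H, h * c ∈ F₀}) :
    (↑F₀ : Set G) ⊆ (↑H : Set G) * C ∧ (↑H : Set G) * C ⊆ (↑F : Set G) ∧
      C.Finite ∧ F₀.card ≤ C.ncard * H.card ∧ C.ncard * H.card ≤ F.card := by
  have hCsub : ∀ c ∈ C, c ∈ 𝓒 ∧ ∃ h ∈ H, h * c ∈ F₀ := by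
    intro c hc; rw [hC] at hc; exact hc
  have key1 : (↑F₀ : Set G) ⊆ (↑H : Set G) * C := by
    intro f hf
    obtain ⟨c, hc𝓒, h, hh, hhc⟩ := hcover f
    have hcC : c ∈ C := by rw [hC]; exact ⟨hc𝓒, h, hh, by rw [hhc]; exact hf⟩
    exact ⟨h, hh, c, hcC, hhc⟩
  have key2 : (↑H : Set G) * C ⊆ (↑F : Set G) := by
    rintro x ⟨h, hh, c, hcC, rfl⟩
    obtain ⟨-, h', hh', hF0⟩ := hCsub c hcC
    have h1 := ((hF₀ _).1 hF0).2 h hh h' hh'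
    have h2 : h * h'⁻¹ * (h' * c) = h * c := by group
    rw [h2] at h1
    exact h1
  have hfin : C.Finite := by
    apply Set.Finite.subset ((H.finite_toSet.inv.mul F.finite_toSet))
    intro c hc
    obtain ⟨-, h, hh, hF0⟩ := hCsub c hc
    exact ⟨h⁻¹, Set.inv_mem_inv.2 hh, h * c, ((hF₀ _).1 hF0).1, by group⟩
  classical
  set Cf := hfin.toFinset with hCf
  set B := Cf.biUnion (fun c => H.image (· * c)) with hBdef
  have hBset : (↑B : Set G) = (↑H : Set G) * C := by
    ext x
    simp only [hBdef, Finset.coe_biUnion, Set.mem_iUnion, Finset.mem_coe,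
      Finset.mem_image, hfin.mem_toFinset, Set.mem_mul]
    constructor
    · rintro ⟨c, hc, h, hh, rfl⟩; exact ⟨h, hh, c, hfin.mem_toFinset.1 hc, rfl⟩
    · rintro ⟨h, hh, c, hc, rfl⟩; exact ⟨c, hfin.mem_toFinset.2 hc, h, hh, rfl⟩
  have hcardB : B.card = Cf.card * H.card := by
    rw [hBdef, Finset.card_biUnion]
    · rw [Finset.sum_congr rfl fun c _ =>
        Finset.card_image_of_injective H (mul_left_injective c)]
      simp [Finset.sum_const, mul_comm]
    · intro c hc c' hc' hne
      exact hdisj c (hCsub c (hfin.mem_toFinset.1 hc)).1 c'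
        (hCsub c' (hfin.mem_toFinset.1 hc')).1 hne
  have hncard : C.ncard = Cf.card := by
    rw [← Set.ncard_coe_finset Cf, hfin.coe_toFinset]
  have hF₀B : F₀ ⊆ B := by
    intro f hf
    have : (f : G) ∈ (↑B : Set G) := hBset ▸ key1 hf
    exact this
  have hBF : B ⊆ F := by
    intro x hx
    have : (x : G) ∈ (↑F : Set G) := key2 (hBset ▸ hx)
    exact this
  refine ⟨key1, key2, hfin, ?_, ?_⟩
  · rw [hncard, ← hcardB]; exact Finset.card_le_card hF₀B
  · rw [hncard, ← hcardB]; exact Finset.card_le_card hBF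
end

section
/- Let r, t be positive integers with t ≥ 3, and let a : {1,…,r} → ℕ and b : {1,…,t} → ℕ. If b is i-periodic for some i ∈ {1,…,t−2}, then a⋄b is ri-periodic. -/
/-- The map a⋄b : {1,…,rt} → ℕ: (a⋄b)(i) = a(j) if i ≡ j (mod r), 1 ≤ j < r,
and (a⋄b)(rk) = a(r) + b(k). -/
def diamond (r : ℕ) (a b : ℕ → ℕ) : ℕ → ℕ := fun i =>
  if r ∣ i then a r + b (i / r) else a (i % r)

/- STATEMENT 10 (Lemma 4.4(i)): if b is i-periodic then a⋄b is (ri)-periodic. -/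
theorem stmt10 (r t : ℕ) (hr : 0 < r) (ht : 3 ≤ t) (a b : ℕ → ℕ)
    (i : ℕ) (hi1 : 1 ≤ i) (hi2 : i ≤ t - 2)
    (hb : ∀ j, 1 ≤ j → j ≤ t - 1 - i → b (i + j) = b j) :
    ∀ j, 1 ≤ j → j ≤ r * t - 1 - r * i →
      diamond r a b (r * i + j) = diamond r a b j := by
  intro j hj1 hj2
  unfold diamond
  by_cases hd : r ∣ j
  · have hd' : r ∣ r * i + j := Dvd.dvd.add (Dvd.intro i rfl) hd
    rw [if_pos hd', if_pos hd]
    obtain ⟨k, rfl⟩ := hd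
    have hk1 : 1 ≤ k := by
      rcases Nat.eq_zero_or_pos k with h | h
      · subst h; simp at hj1
      · exact h
    have hk2 : k ≤ t - 1 - i := by
      have h1 : r * k ≤ r * t - 1 - r * i := hj2
      have hadd : r * (i + k) = r * i + r * k := Nat.mul_add r i k
      have h2 : r * (i + k) < r * t := by omega
      have h3 : i + k < t := lt_of_mul_lt_mul_left h2 (Nat.zero_le r)
      omega
    have : (r * i + r * k) / r = i + k := by
      rw [← Nat.mul_add, Nat.mul_div_cancel_left _ hr]
    rw [this, Nat.mul_div_cancel_left _ hr, hb k hk1 hk2]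
  · have hd' : ¬ r ∣ r * i + j := by
      intro h
      exact hd ((Nat.dvd_add_right (Dvd.intro i rfl)).mp h)
    rw [if_neg hd', if_neg hd, Nat.mul_comm, Nat.add_comm, Nat.add_mul_mod_self_right]
end

section
/- Let r, t be positive integers with t ≥ 2, and let a : {1,…,r} → ℕ and b : {1,…,t} → ℕ. If a⋄b is i-periodic for some i with 1 ≤ i ≤ r − 1, then b(1) = b(2) = ⋯ = b(t−1). -/
/- STATEMENT 12 (Lemma 4.4(iii)): if a⋄b is i-periodic for some 1 ≤ i ≤ r − 1, then
b(1) = b(2) = ⋯ = b(t−1). -/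
theorem stmt12 (r t : ℕ) (hr : 0 < r) (ht : 2 ≤ t) (a b : ℕ → ℕ)
    (i : ℕ) (hi1 : 1 ≤ i) (hi2 : i ≤ r - 1)
    (hper : ∀ j, 1 ≤ j → j ≤ r * t - 1 - i →
      diamond r a b (i + j) = diamond r a b j) :
    ∀ k, 1 ≤ k → k ≤ t - 1 → b k = b 1 := by
  have hir : i < r := by omega
  have key : ∀ k, 1 ≤ k → k ≤ t - 1 → a r + b k = a (r - i) := by
    intro k hk1 hk2
    have hrk : r ≤ r * k := Nat.le_mul_of_pos_right r (by omega)
    have hup : r * k + r ≤ r * t := by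
      have h := Nat.mul_le_mul_left r (show k + 1 ≤ t by omega)
      have : r * (k + 1) = r * k + r := by ring
      omega
    have h := hper (r * k - i) (by omega) (by omega)
    have heq : i + (r * k - i) = r * k := by omega
    rw [heq] at h
    have hdvd : r ∣ r * k := Dvd.intro k rfl
    have hdiv : r * k / r = k := by
      rw [Nat.mul_div_cancel_left k hr]
    have hrep : r * k - i = r * (k - 1) + (r - i) := by
      have h1 : r * ((k - 1) + 1) = r * (k - 1) + r := by ring
      rw [show (k - 1) + 1 = k by omega] at h1
      omega
    have hndvd : ¬ r ∣ (r * k - i) := by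
      rw [hrep]
      intro hd
      have : r ∣ (r - i) := (Nat.dvd_add_right ⟨k - 1, rfl⟩).mp hd
      have := Nat.le_of_dvd (by omega) this
      omega
    have hmod : (r * k - i) % r = r - i := by
      rw [hrep, Nat.mul_add_mod, Nat.mod_eq_of_lt (by omega)]
    simp only [diamond, if_pos hdvd, if_neg hndvd, hdiv, hmod] at h
    exact h
  intro k hk1 hk2
  have h1 := key k hk1 hk2
  have h2 := key 1 le_rfl (by omega)
  omega
end

section
/- Let h, r, t be positive integers, σ : {1,…,r} → ℕ and τ : {1,…,t} → ℕ. Let s be the integral of σ, let u be the integral of τ, and let v be the integral of σ⋄τ. Put h' := rh + σ(1) + σ(2) + ⋯ + σ(r). Then, as subsets of ℤ, {ih + s(i) : 0 ≤ i ≤ r−1} + {jh' + u(j) : 0 ≤ j ≤ t−1} = {kh + v(k) : 0 ≤ k ≤ rt−1}. -/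
open Pointwise

/-- The integral of σ : {1,…,r} → ℕ: s(0) = 0, s(i) = σ(1) + ⋯ + σ(i). -/
def integralOf (σ : ℕ → ℕ) : ℕ → ℕ := fun i => ∑ k ∈ Finset.Icc 1 i, σ k

lemma integral_succ (σ : ℕ → ℕ) (n : ℕ) :
    integralOf σ (n + 1) = integralOf σ n + σ (n + 1) := by
  unfold integralOf
  rw [Finset.sum_Icc_succ_top (Nat.succ_le_succ (Nat.zero_le n))]

lemma key (r : ℕ) (hr : 0 < r) (σ τ : ℕ → ℕ) (n : ℕ) :
    integralOf (diamond r σ τ) n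
      = (n / r) * (∑ k ∈ Finset.Icc 1 r, σ k) + integralOf τ (n / r)
        + integralOf σ (n % r) := by
  have hS : ∑ k ∈ Finset.Icc 1 r, σ k = integralOf σ r := rfl
  induction n with
  | zero => simp [integralOf]
  | succ n ih =>
    rw [integral_succ, ih]
    by_cases hd : r ∣ (n + 1)
    · obtain ⟨m, hm⟩ := hd
      have hm0 : 0 < m := by
        rcases Nat.eq_zero_or_pos m with h0 | h0
        · subst h0; rw [Nat.mul_zero] at hm; omega
        · exact h0
      obtain ⟨m', rfl⟩ : ∃ m', m = m' + 1 := ⟨m - 1, by omega⟩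
      have hm' : n + 1 = r * m' + r := by rw [hm]; ring
      have hn : n = r - 1 + r * m' := by omega
      have hmodn : n % r = r - 1 := by
        rw [hn, Nat.add_mul_mod_self_left, Nat.mod_eq_of_lt (by omega)]
      have hdivn : n / r = m' := by
        rw [hn, Nat.add_mul_div_left _ _ hr, Nat.div_eq_of_lt (by omega)]
        omega
      have hmod1 : (n + 1) % r = 0 := by rw [hm, Nat.mul_mod_right]
      have hdiv1 : (n + 1) / r = m' + 1 := by
        rw [hm, Nat.mul_div_cancel_left _ hr]
      have hdval : diamond r σ τ (n + 1) = σ r + τ (m' + 1) := by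
        unfold diamond
        rw [if_pos ⟨m' + 1, hm⟩, hdiv1]
      have hSr : integralOf σ r = integralOf σ (r - 1) + σ r := by
        have : r - 1 + 1 = r := by omega
        rw [← this, integral_succ, this]
      rw [hmodn, hdivn, hmod1, hdiv1, hdval, integral_succ, hS, hSr]
      have hs0 : integralOf σ 0 = 0 := by simp [integralOf]
      rw [hs0]
      ring
    · have hr1 : 1 < r := by
        rcases Nat.lt_or_ge 1 r with h1 | h1
        · exact h1
        · exfalso; apply hd; interval_cases r; exact one_dvd _
      have hmodeq : (n + 1) % r = (n % r + 1) % r := by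
        rw [Nat.add_mod n 1 r, Nat.mod_eq_of_lt hr1]
      have hlt : n % r < r := Nat.mod_lt _ hr
      have hne : n % r + 1 ≠ r := by
        intro hcon
        apply hd
        apply Nat.dvd_of_mod_eq_zero
        rw [hmodeq, hcon, Nat.mod_self]
      have hmod1 : (n + 1) % r = n % r + 1 := by
        rw [hmodeq, Nat.mod_eq_of_lt (by omega)]
      have hdiv1 : (n + 1) / r = n / r := by
        rw [Nat.succ_div, if_neg hd]; omega
      have hdval : diamond r σ τ (n + 1) = σ (n % r + 1) := by
        unfold diamond
        rw [if_neg hd, hmod1]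
      rw [hmod1, hdiv1, hdval, integral_succ]
      ring

/- STATEMENT 13: as subsets of ℤ, {ih + s(i) : 0 ≤ i ≤ r−1} + {jh' + u(j) : 0 ≤ j ≤ t−1}
 = {kh + v(k) : 0 ≤ k ≤ rt−1}, where s, u, v are the integrals of σ, τ, σ⋄τ and
h' = rh + σ(1) + ⋯ + σ(r). -/
theorem stmt13 (h r t : ℕ) (hh : 0 < h) (hr : 0 < r) (ht : 0 < t)
    (σ τ : ℕ → ℕ) :
    ((Finset.range r).image fun i : ℕ => ((i * h + integralOf σ i : ℕ) : ℤ)) +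
      ((Finset.range t).image fun j : ℕ =>
        ((j * (r * h + ∑ k ∈ Finset.Icc 1 r, σ k) + integralOf τ j : ℕ) : ℤ)) =
    (Finset.range (r * t)).image
      (fun k : ℕ => ((k * h + integralOf (diamond r σ τ) k : ℕ) : ℤ)) := by
  ext x
  simp only [Finset.mem_add, Finset.mem_image, Finset.mem_range]
  constructor
  · rintro ⟨_, ⟨i, hi, rfl⟩, _, ⟨j, hj, rfl⟩, rfl⟩
    refine ⟨j * r + i, ?_, ?_⟩
    · have h1 : (j + 1) * r ≤ t * r := Nat.mul_le_mul_right r hj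
      have h2 : (j + 1) * r = j * r + r := by ring
      have h3 : t * r = r * t := Nat.mul_comm t r
      omega
    · rw [key r hr σ τ]
      have h1 : (j * r + i) / r = j := by
        rw [Nat.add_comm, Nat.add_mul_div_right _ _ hr, Nat.div_eq_of_lt hi]
        omega
      have h2 : (j * r + i) % r = i := by
        rw [Nat.add_comm, Nat.add_mul_mod_self_right, Nat.mod_eq_of_lt hi]
      rw [h1, h2]
      push_cast
      ring
  · rintro ⟨k, hk, rfl⟩
    refine ⟨_, ⟨k % r, Nat.mod_lt _ hr, rfl⟩, _, ⟨k / r, ?_, rfl⟩, ?_⟩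
    · have h3 : t * r = r * t := Nat.mul_comm t r
      exact (Nat.div_lt_iff_lt_mul hr).mpr (by omega)
    · rw [key r hr σ τ]
      have hk2 : r * (k / r) + k % r = k := Nat.div_add_mod k r
      set i := k % r with hi
      set j := k / r with hj
      rw [← hk2]
      push_cast
      ring
end

section
/- Let (X, μ) and (Y, ν) be probability spaces and let λ be a probability measure on X × Y whose image under the first coordinate projection is μ and whose image under the second coordinate projection is ν. Suppose R : Y → Y is an invertible measure-preserving transformation of (Y, ν) (a bimeasurable bijection with ν ∘ R^{−1} = ν) which is ergodic, and suppose λ is invariant under the map id_X × R : X × Y → X × Y. Then λ equals the product measure μ × ν. -/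
open MeasureTheory

/- STATEMENT 15 (Furstenberg's lemma, Lemma 5.2): if λ is a probability measure on
X × Y with marginals μ and ν, and λ is invariant under id × R for an ergodic
invertible measure-preserving transformation R of (Y, ν), then λ = μ × ν. -/
theorem stmt15 {X Y : Type*} [MeasurableSpace X] [MeasurableSpace Y]
    (μ : Measure X) (ν : Measure Y)
    [IsProbabilityMeasure μ] [IsProbabilityMeasure ν]
    (lam : Measure (X × Y)) [IsProbabilityMeasure lam]
    (hfst : lam.map Prod.fst = μ) (hsnd : lam.map Prod.snd = ν)
    (R : Y ≃ᵐ Y) (hR : MeasurePreserving R ν ν)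
    (herg : ∀ B : Set Y, MeasurableSet B → ν (symmDiff (⇑R ⁻¹' B) B) = 0 →
      ν B = 0 ∨ ν B = 1)
    (hinv : lam.map (Prod.map id ⇑R) = lam) :
    lam = μ.prod ν := by
  have hT : Measurable (Prod.map (id : X → X) ⇑R) := measurable_id.prodMap R.measurable
  -- R is ergodic
  have hErg : Ergodic ⇑R ν := by
    refine ⟨hR, ⟨fun s hs hs' => Filter.eventuallyConst_set'.2 ?_⟩⟩
    rcases herg s hs (by rw [hs', symmDiff_self]; simp) with h | h
    · exact Or.inl (ae_eq_empty.2 h)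
    · exact Or.inr (ae_eq_univ.2 ((prob_compl_eq_zero_iff hs).2 h))
  -- it suffices to check rectangles
  refine ((Measure.prod_eq fun A B hA hB => ?_)).symm
  -- the fiber measure over A
  set νA : Measure Y := (lam.restrict (Prod.fst ⁻¹' A)).map Prod.snd with hνA
  have hνAapp : ∀ B : Set Y, MeasurableSet B →
      νA B = lam (Prod.fst ⁻¹' A ∩ Prod.snd ⁻¹' B) := by
    intro B hB
    rw [hνA, Measure.map_apply measurable_snd hB,
      Measure.restrict_apply (measurable_snd hB), Set.inter_comm]
  have hν : ∀ B : Set Y, MeasurableSet B → ν B = lam (Prod.snd ⁻¹' B) := by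
    intro B hB
    rw [← hsnd, Measure.map_apply measurable_snd hB]
  haveI : IsFiniteMeasure νA := by
    rw [hνA]; exact Measure.isFiniteMeasure_map _ _
  have hac : νA ≪ ν := by
    refine Measure.AbsolutelyContinuous.mk fun B hB h0 => ?_
    rw [hνAapp B hB]
    refine measure_mono_null Set.inter_subset_right ?_
    rw [← hν B hB]; exact h0
  -- invariance of νA under R
  have hinvA : ∀ B : Set Y, MeasurableSet B → νA (⇑R ⁻¹' B) = νA B := by
    intro B hB
    rw [hνAapp _ (R.measurable hB), hνAapp B hB]
    have hset : Prod.fst ⁻¹' A ∩ Prod.snd ⁻¹' (⇑R ⁻¹' B)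
        = Prod.map (id : X → X) ⇑R ⁻¹' (Prod.fst ⁻¹' A ∩ Prod.snd ⁻¹' B) := by
      ext p; simp [Prod.map]
    rw [hset, ← Measure.map_apply hT ((hA.preimage measurable_fst).inter
      (hB.preimage measurable_snd)), hinv]
  -- the Radon-Nikodym derivative is a.e. invariant
  set f : Y → ENNReal := νA.rnDeriv ν with hf
  have hfm : Measurable f := Measure.measurable_rnDeriv _ _
  have hint : ∀ B : Set Y, MeasurableSet B → ∫⁻ y in B, f y ∂ν = νA B := by
    intro B hB
    exact Measure.setLIntegral_rnDeriv hac B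
  have hcomp : f ∘ ⇑R =ᵐ[ν] f := by
    refine ae_eq_of_forall_setLIntegral_eq_of_sigmaFinite (hfm.comp R.measurable) hfm
      fun B hB _ => ?_
    have hsB : MeasurableSet (⇑R.symm ⁻¹' B) := R.symm.measurable hB
    have hpre : ⇑R ⁻¹' (⇑R.symm ⁻¹' B) = B := by
      ext y; simp
    calc ∫⁻ y in B, (f ∘ ⇑R) y ∂ν
        = ∫⁻ y in ⇑R ⁻¹' (⇑R.symm ⁻¹' B), f (R y) ∂ν := by rw [hpre]; rfl
      _ = ∫⁻ y in ⇑R.symm ⁻¹' B, f y ∂ν := hR.setLIntegral_comp_preimage hsB hfm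
      _ = νA (⇑R.symm ⁻¹' B) := hint _ hsB
      _ = νA (⇑R ⁻¹' (⇑R.symm ⁻¹' B)) := (hinvA _ hsB).symm
      _ = νA B := by rw [hpre]
      _ = ∫⁻ y in B, f y ∂ν := (hint B hB).symm
  obtain ⟨c, hc⟩ := hErg.ae_eq_const_of_ae_eq_comp₀ hfm.nullMeasurable hcomp
  -- νA = c • ν
  have hνAc : ∀ B : Set Y, MeasurableSet B → νA B = c * ν B := by
    intro B hB
    rw [← hint B hB]
    calc ∫⁻ y in B, f y ∂ν = ∫⁻ _ in B, c ∂ν :=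
          lintegral_congr_ae (ae_restrict_of_ae hc)
      _ = c * ν B := by rw [setLIntegral_const]
  have hcval : c = μ A := by
    have h1 := hνAc Set.univ MeasurableSet.univ
    have h2 : νA Set.univ = μ A := by
      rw [hνAapp _ MeasurableSet.univ]
      simp only [Set.preimage_univ, Set.inter_univ]
      rw [← hfst, Measure.map_apply measurable_fst hA]
    rw [h2, measure_univ, mul_one] at h1
    exact h1.symm
  rw [Set.prod_eq, ← hνAapp B hB, hνAc B hB, hcval]
end

section
/- Let G be a countable group and let T = (T_g)_{g∈G} and T' = (T'_g)_{g∈G} be measure-preserving actions of G by Borel automorphisms on standard σ-finite measure spaces (X, μ) and (X', μ'). Assume both actions are ergodic (every measurable set invariant under all T_g is null or has null complement, and likewise for T') and essentially free (for every g ≠ 1 the set of fixed points of T_g is null, and likewise for T'). Let A ⊆ X and A' ⊆ X' be measurable sets with μ(A) = μ'(A') > 0, and let θ : A → A' be a Borel bijection with μ(θ^{−1}(B)) = μ'(B) for every measurable B ⊆ A', such that for every x ∈ A and g ∈ G: T_g x ∈ A if and only if T'_g(θx) ∈ A', and θ(T_g x) = T'_g(θx) whenever T_g x ∈ A. Then T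 and T' are measure-theoretically conjugate: there exist conull measurable subsets X_0 ⊆ X and X'_0 ⊆ X', invariant under the respective actions, and a Borel bijection Φ : X_0 → X'_0 with μ(Φ^{−1}(B)) = μ'(B) for every measurable B ⊆ X'_0 and Φ(T_g x) = T'_g(Φ x) for all g ∈ G and x ∈ X_0. -/
open MeasureTheory

/- STATEMENT 17 (Lemma 5.8): a measure-preserving bijection θ between positive-measure
subsets A, A' that is equivariant wherever defined extends to a measure-theoretic
conjugacy of the two ergodic essentially free actions. -/
theorem stmt17 {G : Type*} [Group G] [Countable G]
    {X X' : Type*} [MeasurableSpace X] [MeasurableSpace X']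
    [StandardBorelSpace X] [StandardBorelSpace X']
    (μ : Measure X) (μ' : Measure X') [SigmaFinite μ] [SigmaFinite μ']
    (T : G → X ≃ᵐ X) (T' : G → X' ≃ᵐ X')
    (hTmul : ∀ g h x, T (g * h) x = T g (T h x))
    (hT'mul : ∀ g h x, T' (g * h) x = T' g (T' h x))
    (hTone : ∀ x, T 1 x = x) (hT'one : ∀ x, T' 1 x = x)
    (hTmp : ∀ g, MeasurePreserving (T g) μ μ)
    (hT'mp : ∀ g, MeasurePreserving (T' g) μ' μ')
    (herg : ∀ B : Set X, MeasurableSet B → (∀ g, ⇑(T g) ⁻¹' B = B) →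
      μ B = 0 ∨ μ Bᶜ = 0)
    (herg' : ∀ B : Set X', MeasurableSet B → (∀ g, ⇑(T' g) ⁻¹' B = B) →
      μ' B = 0 ∨ μ' Bᶜ = 0)
    (hfree : ∀ g : G, g ≠ 1 → μ {x | T g x = x} = 0)
    (hfree' : ∀ g : G, g ≠ 1 → μ' {x | T' g x = x} = 0)
    (A : Set X) (A' : Set X') (hA : MeasurableSet A) (hA' : MeasurableSet A')
    (hAA' : μ A = μ' A') (hApos : 0 < μ A)
    (θ : A ≃ A')
    (hθmeas : Measurable fun a : A => ((θ a : A') : X'))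
    (hθsymm : Measurable fun a : A' => ((θ.symm a : A) : X))
    (hθpres : ∀ B : Set X', MeasurableSet B → B ⊆ A' →
      μ (Subtype.val '' (⇑θ ⁻¹' (Subtype.val ⁻¹' B))) = μ' B)
    (hiff : ∀ (x : A) (g : G), T g (x : X) ∈ A ↔ T' g ((θ x : A') : X') ∈ A')
    (heq : ∀ (x : A) (g : G) (h : T g (x : X) ∈ A),
      ((θ ⟨T g (x : X), h⟩ : A') : X') = T' g ((θ x : A') : X')) :
    ∃ (X₀ : Set X) (X₀' : Set X') (Φ : X → X'),
      MeasurableSet X₀ ∧ MeasurableSet X₀' ∧ μ X₀ᶜ = 0 ∧ μ' X₀'ᶜ = 0 ∧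
      (∀ g, ⇑(T g) ⁻¹' X₀ = X₀) ∧ (∀ g, ⇑(T' g) ⁻¹' X₀' = X₀') ∧
      Set.BijOn Φ X₀ X₀' ∧
      (Measurable fun x : X₀ => Φ (x : X)) ∧
      (∀ B : Set X', MeasurableSet B → B ⊆ X₀' → μ (X₀ ∩ Φ ⁻¹' B) = μ' B) ∧
      (∀ g : G, ∀ x ∈ X₀, Φ (T g x) = T' g (Φ x)) := by
  classical
  obtain ⟨e, he⟩ := exists_surjective_nat G
  -- basic facts
  have hTinv : ∀ (g : G) (x : X), T g⁻¹ (T g x) = x := by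
    intro g x; rw [← hTmul, inv_mul_cancel, hTone]
  have hT'inv : ∀ (g : G) (y : X'), T' g⁻¹ (T' g y) = y := by
    intro g y; rw [← hT'mul, inv_mul_cancel, hT'one]
  obtain ⟨a0, ha0⟩ : A.Nonempty := nonempty_of_measure_ne_zero hApos.ne'
  have hA'pos : 0 < μ' A' := hAA' ▸ hApos
  obtain ⟨a0', ha0'⟩ : A'.Nonempty := nonempty_of_measure_ne_zero hA'pos.ne'
  set F : A → X' := fun a => ((θ a : A') : X') with hFdef
  set F' : A' → X := fun a => ((θ.symm a : A) : X) with hF'def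
  -- symmetric versions of hiff and heq
  have hiff' : ∀ (y : A') (g : G), T' g (y : X') ∈ A' ↔ T g (F' y) ∈ A := by
    intro y g
    have h := hiff (θ.symm y) g
    rw [Equiv.apply_symm_apply] at h
    exact h.symm
  have heq' : ∀ (y : A') (g : G) (h : T' g (y : X') ∈ A'),
      ((θ.symm ⟨T' g (y : X'), h⟩ : A) : X) = T g (F' y) := by
    intro y g h
    have hx : T g (F' y) ∈ A := (hiff' y g).mp h
    have h1 := heq (θ.symm y) g hx
    rw [Equiv.apply_symm_apply] at h1
    have h2 : (⟨T' g (y : X'), h⟩ : A') = θ ⟨T g (F' y), hx⟩ := by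
      apply Subtype.ext; exact h1.symm
    rw [h2, Equiv.symm_apply_apply]
  -- well-definedness
  have hwd : ∀ (x : X) (g h : G) (hg : T g x ∈ A) (hh : T h x ∈ A),
      T' g⁻¹ (F ⟨T g x, hg⟩) = T' h⁻¹ (F ⟨T h x, hh⟩) := by
    intro x g h hg hh
    have hmem : T (h * g⁻¹) ((⟨T g x, hg⟩ : A) : X) ∈ A := by
      show T (h * g⁻¹) (T g x) ∈ A
      rw [← hTmul, inv_mul_cancel_right]; exact hh
    have h1 := heq ⟨T g x, hg⟩ (h * g⁻¹) hmem
    have h2 : (⟨T (h * g⁻¹) ((⟨T g x, hg⟩ : A) : X), hmem⟩ : A) = ⟨T h x, hh⟩ := by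
      apply Subtype.ext
      show T (h * g⁻¹) (T g x) = T h x
      rw [← hTmul, inv_mul_cancel_right]
    rw [h2] at h1
    show T' g⁻¹ (F ⟨T g x, hg⟩) = T' h⁻¹ (F ⟨T h x, hh⟩)
    rw [show F ⟨T h x, hh⟩ = T' (h * g⁻¹) (F ⟨T g x, hg⟩) from h1, ← hT'mul]
    congr 1
    group
  have hwd' : ∀ (y : X') (g h : G) (hg : T' g y ∈ A') (hh : T' h y ∈ A'),
      T g⁻¹ (F' ⟨T' g y, hg⟩) = T h⁻¹ (F' ⟨T' h y, hh⟩) := by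
    intro y g h hg hh
    have hmem : T' (h * g⁻¹) ((⟨T' g y, hg⟩ : A') : X') ∈ A' := by
      show T' (h * g⁻¹) (T' g y) ∈ A'
      rw [← hT'mul, inv_mul_cancel_right]; exact hh
    have h1 := heq' ⟨T' g y, hg⟩ (h * g⁻¹) hmem
    have h2 : (⟨T' (h * g⁻¹) ((⟨T' g y, hg⟩ : A') : X'), hmem⟩ : A') = ⟨T' h y, hh⟩ := by
      apply Subtype.ext
      show T' (h * g⁻¹) (T' g y) = T' h y
      rw [← hT'mul, inv_mul_cancel_right]
    rw [h2] at h1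
    show T g⁻¹ (F' ⟨T' g y, hg⟩) = T h⁻¹ (F' ⟨T' h y, hh⟩)
    rw [show F' ⟨T' h y, hh⟩ = T (h * g⁻¹) (F' ⟨T' g y, hg⟩) from h1, ← hTmul]
    congr 1
    group
  -- the sets and maps
  set X₀ : Set X := ⋃ g : G, ⇑(T g) ⁻¹' A with hX₀def
  set X₀' : Set X' := ⋃ g : G, ⇑(T' g) ⁻¹' A' with hX₀'def
  have hmemX₀ : ∀ x : X, x ∈ X₀ ↔ ∃ n, T (e n) x ∈ A := by
    intro x
    rw [hX₀def, Set.mem_iUnion]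
    constructor
    · rintro ⟨g, hg⟩; obtain ⟨n, rfl⟩ := he g; exact ⟨n, hg⟩
    · rintro ⟨n, hn⟩; exact ⟨e n, hn⟩
  have hmemX₀' : ∀ y : X', y ∈ X₀' ↔ ∃ n, T' (e n) y ∈ A' := by
    intro y
    rw [hX₀'def, Set.mem_iUnion]
    constructor
    · rintro ⟨g, hg⟩; obtain ⟨n, rfl⟩ := he g; exact ⟨n, hg⟩
    · rintro ⟨n, hn⟩; exact ⟨e n, hn⟩
  set Φ : X → X' := fun x =>
    if h : ∃ n, T (e n) x ∈ A then
      T' (e (Nat.find h))⁻¹ (F ⟨T (e (Nat.find h)) x, Nat.find_spec h⟩)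
    else (a0' : X') with hΦdef
  set Ψ : X' → X := fun y =>
    if h : ∃ n, T' (e n) y ∈ A' then
      T (e (Nat.find h))⁻¹ (F' ⟨T' (e (Nat.find h)) y, Nat.find_spec h⟩)
    else (a0 : X) with hΨdef
  have hΦspec : ∀ (x : X) (g : G) (hg : T g x ∈ A), Φ x = T' g⁻¹ (F ⟨T g x, hg⟩) := by
    intro x g hg
    have h : ∃ n, T (e n) x ∈ A := by
      obtain ⟨n, rfl⟩ := he g; exact ⟨n, hg⟩
    rw [hΦdef]
    simp only [dif_pos h]
    exact hwd x _ g (Nat.find_spec h) hg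
  have hΨspec : ∀ (y : X') (g : G) (hg : T' g y ∈ A'), Ψ y = T g⁻¹ (F' ⟨T' g y, hg⟩) := by
    intro y g hg
    have h : ∃ n, T' (e n) y ∈ A' := by
      obtain ⟨n, rfl⟩ := he g; exact ⟨n, hg⟩
    rw [hΨdef]
    simp only [dif_pos h]
    exact hwd' y _ g (Nat.find_spec h) hg
    -- Φ conjugates membership in A
  have hΦiff : ∀ (x : X) (g : G) (hg : T g x ∈ A) (k : G),
      T k x ∈ A ↔ T' k (Φ x) ∈ A' := by
    intro x g hg k
    rw [hΦspec x g hg]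
    have h1 : T' k (T' g⁻¹ (F ⟨T g x, hg⟩)) = T' (k * g⁻¹) (F ⟨T g x, hg⟩) := by
      rw [hT'mul]
    rw [h1]
    have h2 := hiff ⟨T g x, hg⟩ (k * g⁻¹)
    have h3 : T (k * g⁻¹) ((⟨T g x, hg⟩ : A) : X) = T k x := by
      show T (k * g⁻¹) (T g x) = T k x
      rw [← hTmul, inv_mul_cancel_right]
    rw [h3] at h2
    exact h2
  have hΨiff : ∀ (y : X') (g : G) (hg : T' g y ∈ A') (k : G),
      T' k y ∈ A' ↔ T k (Ψ y) ∈ A := by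
    intro y g hg k
    rw [hΨspec y g hg]
    have h1 : T k (T g⁻¹ (F' ⟨T' g y, hg⟩)) = T (k * g⁻¹) (F' ⟨T' g y, hg⟩) := by
      rw [hTmul]
    rw [h1]
    have h2 := hiff' ⟨T' g y, hg⟩ (k * g⁻¹)
    have h3 : T' (k * g⁻¹) ((⟨T' g y, hg⟩ : A') : X') = T' k y := by
      show T' (k * g⁻¹) (T' g y) = T' k y
      rw [← hT'mul, inv_mul_cancel_right]
    rw [h3] at h2
    exact h2
  have hΦmaps : ∀ x ∈ X₀, Φ x ∈ X₀' := by
    intro x hx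
    obtain ⟨n, hn⟩ := (hmemX₀ x).mp hx
    rw [hmemX₀']
    exact ⟨n, (hΦiff x (e n) hn (e n)).mp hn⟩
  have hΨmaps : ∀ y ∈ X₀', Ψ y ∈ X₀ := by
    intro y hy
    obtain ⟨n, hn⟩ := (hmemX₀' y).mp hy
    rw [hmemX₀]
    exact ⟨n, (hΨiff y (e n) hn (e n)).mp hn⟩
  -- Ψ ∘ Φ = id on X₀
  have hΨΦ : ∀ x ∈ X₀, Ψ (Φ x) = x := by
    intro x hx
    obtain ⟨n, hn⟩ := (hmemX₀ x).mp hx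
    set g := e n with hg
    have hΦx : Φ x = T' g⁻¹ (F ⟨T g x, hn⟩) := hΦspec x g hn
    have hmem : T' g (Φ x) ∈ A' := by
      rw [hΦx]
      have : T' g (T' g⁻¹ (F ⟨T g x, hn⟩)) = F ⟨T g x, hn⟩ := by
        rw [← hT'mul, mul_inv_cancel, hT'one]
      rw [this]
      exact (θ ⟨T g x, hn⟩).2
    rw [hΨspec (Φ x) g hmem]
    have h4 : (⟨T' g (Φ x), hmem⟩ : A') = θ ⟨T g x, hn⟩ := by
      apply Subtype.ext
      show T' g (Φ x) = F ⟨T g x, hn⟩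
      rw [hΦx, ← hT'mul, mul_inv_cancel, hT'one]
    show T g⁻¹ ((θ.symm ⟨T' g (Φ x), hmem⟩ : A) : X) = x
    rw [h4, Equiv.symm_apply_apply]
    exact hTinv g x
  have hΦΨ : ∀ y ∈ X₀', Φ (Ψ y) = y := by
    intro y hy
    obtain ⟨n, hn⟩ := (hmemX₀' y).mp hy
    set g := e n with hg
    have hΨy : Ψ y = T g⁻¹ (F' ⟨T' g y, hn⟩) := hΨspec y g hn
    have hmem : T g (Ψ y) ∈ A := by
      rw [hΨy]
      have : T g (T g⁻¹ (F' ⟨T' g y, hn⟩)) = F' ⟨T' g y, hn⟩ := by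
        rw [← hTmul, mul_inv_cancel, hTone]
      rw [this]
      exact (θ.symm ⟨T' g y, hn⟩).2
    rw [hΦspec (Ψ y) g hmem]
    have h4 : (⟨T g (Ψ y), hmem⟩ : A) = θ.symm ⟨T' g y, hn⟩ := by
      apply Subtype.ext
      show T g (Ψ y) = F' ⟨T' g y, hn⟩
      rw [hΨy, ← hTmul, mul_inv_cancel, hTone]
    show T' g⁻¹ ((θ ⟨T g (Ψ y), hmem⟩ : A') : X') = y
    rw [h4, Equiv.apply_symm_apply]
    exact hT'inv g y
  -- equivariance
  have hequiv : ∀ (g : G), ∀ x ∈ X₀, Φ (T g x) = T' g (Φ x) := by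
    intro g x hx
    obtain ⟨n, hn⟩ := (hmemX₀ x).mp hx
    set k := e n with hk
    -- T k x ∈ A, so T (k * g⁻¹) (T g x) = T k x ∈ A
    have hmem : T (k * g⁻¹) (T g x) ∈ A := by
      rw [← hTmul, inv_mul_cancel_right]; exact hn
    rw [hΦspec (T g x) (k * g⁻¹) hmem, hΦspec x k hn]
    have h4 : (⟨T (k * g⁻¹) (T g x), hmem⟩ : A) = ⟨T k x, hn⟩ := by
      apply Subtype.ext
      show T (k * g⁻¹) (T g x) = T k x
      rw [← hTmul, inv_mul_cancel_right]
    rw [h4, ← hT'mul]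
    congr 1
    group

    -- invariance of X₀ and X₀'
  have hX₀inv : ∀ g, ⇑(T g) ⁻¹' X₀ = X₀ := by
    intro g
    ext x
    simp only [Set.mem_preimage, hX₀def, Set.mem_iUnion]
    constructor
    · rintro ⟨h, hh⟩
      exact ⟨h * g, by rw [hTmul]; exact hh⟩
    · rintro ⟨k, hk⟩
      refine ⟨k * g⁻¹, ?_⟩
      show T (k * g⁻¹) (T g x) ∈ A
      rw [← hTmul, inv_mul_cancel_right]; exact hk
  have hX₀'inv : ∀ g, ⇑(T' g) ⁻¹' X₀' = X₀' := by
    intro g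
    ext y
    simp only [Set.mem_preimage, hX₀'def, Set.mem_iUnion]
    constructor
    · rintro ⟨h, hh⟩
      exact ⟨h * g, by rw [hT'mul]; exact hh⟩
    · rintro ⟨k, hk⟩
      refine ⟨k * g⁻¹, ?_⟩
      show T' (k * g⁻¹) (T' g y) ∈ A'
      rw [← hT'mul, inv_mul_cancel_right]; exact hk
  -- measurability of X₀, X₀'
  have hX₀meas : MeasurableSet X₀ :=
    MeasurableSet.iUnion fun g => (T g).measurable hA
  have hX₀'meas : MeasurableSet X₀' :=
    MeasurableSet.iUnion fun g => (T' g).measurable hA'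
  -- conullity
  have hX₀conull : μ X₀ᶜ = 0 := by
    rcases herg X₀ hX₀meas hX₀inv with h | h
    · exfalso
      have hsub : A ⊆ X₀ := by
        intro x hx
        rw [hmemX₀]
        obtain ⟨n, hn⟩ := he 1
        exact ⟨n, by rw [hn, hTone]; exact hx⟩
      exact absurd (measure_mono_null hsub h) hApos.ne'
    · exact h
  have hX₀'conull : μ' X₀'ᶜ = 0 := by
    rcases herg' X₀' hX₀'meas hX₀'inv with h | h
    · exfalso
      have hsub : A' ⊆ X₀' := by
        intro y hy
        rw [hmemX₀']
        obtain ⟨n, hn⟩ := he 1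
        exact ⟨n, by rw [hn, hT'one]; exact hy⟩
      exact absurd (measure_mono_null hsub h) hA'pos.ne'
    · exact h
  -- partitions of X₀ and X₀'
  set P : ℕ → Set X := fun n =>
    ⇑(T (e n)) ⁻¹' A ∩ ⋂ m < n, (⇑(T (e m)) ⁻¹' A)ᶜ with hPdef
  set P' : ℕ → Set X' := fun n =>
    ⇑(T' (e n)) ⁻¹' A' ∩ ⋂ m < n, (⇑(T' (e m)) ⁻¹' A')ᶜ with hP'def
  have hPmem : ∀ (n : ℕ) (x : X), x ∈ P n ↔ T (e n) x ∈ A ∧ ∀ m < n, T (e m) x ∉ A := by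
    intro n x
    simp [hPdef, Set.mem_iInter]
  have hP'mem : ∀ (n : ℕ) (y : X'), y ∈ P' n ↔ T' (e n) y ∈ A' ∧ ∀ m < n, T' (e m) y ∉ A' := by
    intro n y
    simp [hP'def, Set.mem_iInter]
  have hPmeas : ∀ n, MeasurableSet (P n) := by
    intro n
    exact ((T (e n)).measurable hA).inter
      (MeasurableSet.iInter fun m => MeasurableSet.iInter fun _ =>
        ((T (e m)).measurable hA).compl)
  have hP'meas : ∀ n, MeasurableSet (P' n) := by
    intro n
    exact ((T' (e n)).measurable hA').inter
      (MeasurableSet.iInter fun m => MeasurableSet.iInter fun _ =>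
        ((T' (e m)).measurable hA').compl)
  have hPkey : ∀ m n, m < n → Disjoint (P m) (P n) := by
    intro m n hlt
    rw [Set.disjoint_left]
    intro x hxm hxn
    exact ((hPmem n x).mp hxn).2 m hlt ((hPmem m x).mp hxm).1
  have hPdisj : Pairwise (Function.onFun Disjoint P) := by
    intro m n hmn
    rcases hmn.lt_or_gt with h | h
    · exact hPkey m n h
    · exact (hPkey n m h).symm
  have hP'key : ∀ m n, m < n → Disjoint (P' m) (P' n) := by
    intro m n hlt
    rw [Set.disjoint_left]
    intro y hym hyn
    exact ((hP'mem n y).mp hyn).2 m hlt ((hP'mem m y).mp hym).1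
  have hP'disj : Pairwise (Function.onFun Disjoint P') := by
    intro m n hmn
    rcases hmn.lt_or_gt with h | h
    · exact hP'key m n h
    · exact (hP'key n m h).symm
  have hPunion : (⋃ n, P n) = X₀ := by
    ext x
    rw [Set.mem_iUnion, hmemX₀]
    constructor
    · rintro ⟨n, hn⟩; exact ⟨n, ((hPmem n x).mp hn).1⟩
    · rintro h
      refine ⟨Nat.find h, (hPmem _ x).mpr ⟨Nat.find_spec h, fun m hm => Nat.find_min h hm⟩⟩
  have hP'union : (⋃ n, P' n) = X₀' := by
    ext y
    rw [Set.mem_iUnion, hmemX₀']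
    constructor
    · rintro ⟨n, hn⟩; exact ⟨n, ((hP'mem n y).mp hn).1⟩
    · rintro h
      refine ⟨Nat.find h, (hP'mem _ y).mpr ⟨Nat.find_spec h, fun m hm => Nat.find_min h hm⟩⟩

    -- the sets R g B
  set R : G → Set X' → Set X := fun g B =>
    Subtype.val '' (F ⁻¹' (⇑(T' g⁻¹) ⁻¹' B)) with hRdef
  have hRmem : ∀ (g : G) (B : Set X') (a : X),
      a ∈ R g B ↔ ∃ ha : a ∈ A, T' g⁻¹ (F ⟨a, ha⟩) ∈ B := by
    intro g B a
    rw [hRdef]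
    constructor
    · rintro ⟨⟨a, ha⟩, hmem, rfl⟩
      exact ⟨ha, hmem⟩
    · rintro ⟨ha, hb⟩
      exact ⟨⟨a, ha⟩, hb, rfl⟩
  have hRmeas : ∀ (g : G) (B : Set X'), MeasurableSet B → MeasurableSet (R g B) := by
    intro g B hB
    exact hA.subtype_image (hθmeas ((T' g⁻¹).measurable hB))
  -- decomposition of X₀ ∩ Φ⁻¹' B
  have hkey : ∀ B : Set X',
      X₀ ∩ Φ ⁻¹' B = ⋃ n, P n ∩ ⇑(T (e n)) ⁻¹' (R (e n) B) := by
    intro B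
    ext x
    rw [Set.mem_iUnion]
    constructor
    · rintro ⟨hx₀, hxB⟩
      have h : ∃ n, T (e n) x ∈ A := (hmemX₀ x).mp hx₀
      refine ⟨Nat.find h, (hPmem _ x).mpr ⟨Nat.find_spec h, fun m hm => Nat.find_min h hm⟩, ?_⟩
      rw [Set.mem_preimage, hRmem]
      refine ⟨Nat.find_spec h, ?_⟩
      rw [← hΦspec x (e (Nat.find h)) (Nat.find_spec h)]
      exact hxB
    · rintro ⟨n, hPn, hRn⟩
      obtain ⟨hin, -⟩ := (hPmem n x).mp hPn
      obtain ⟨ha, hb⟩ := (hRmem (e n) B (T (e n) x)).mp (Set.mem_preimage.mp hRn)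
      refine ⟨(hmemX₀ x).mpr ⟨n, hin⟩, ?_⟩
      rw [Set.mem_preimage, hΦspec x (e n) hin]
      exact hb
  -- measurability of Φ on X₀
  have hΦmeasOn : Measurable fun x : X₀ => Φ (x : X) := by
    intro B hB
    have h1 : MeasurableSet (X₀ ∩ Φ ⁻¹' B) := by
      rw [hkey B]
      exact MeasurableSet.iUnion fun n =>
        (hPmeas n).inter ((T (e n)).measurable (hRmeas (e n) B hB))
    have h2 : (fun x : X₀ => Φ (x : X)) ⁻¹' B = Subtype.val ⁻¹' (X₀ ∩ Φ ⁻¹' B) := by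
      ext x
      simp [x.2]
    rw [h2]
    exact h1.preimage measurable_subtype_coe
  -- per-piece measure identity
  have hpiece : ∀ (B : Set X') (hB : MeasurableSet B) (n : ℕ),
      μ (P n ∩ ⇑(T (e n)) ⁻¹' (R (e n) B)) = μ' (P' n ∩ B) := by
    intro B hB n
    set g := e n with hgdef
    set W : Set X' := ⇑(T' g⁻¹) ⁻¹' B ∩ ⋂ m, ⋂ (_ : m < n), (⇑(T' (e m * g⁻¹)) ⁻¹' A')ᶜ
      with hWdef
    set Q' : Set X' := A' ∩ W with hQ'def
    have hWmeas : MeasurableSet W :=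
      ((T' g⁻¹).measurable hB).inter
        (MeasurableSet.iInter fun m => MeasurableSet.iInter fun _ =>
          ((T' (e m * g⁻¹)).measurable hA').compl)
    have hQ'meas : MeasurableSet Q' := hA'.inter hWmeas
    set D : Set X := R g B ∩ ⋂ m, ⋂ (_ : m < n), (⇑(T (e m * g⁻¹)) ⁻¹' A)ᶜ with hDdef
    have hDmeas : MeasurableSet D :=
      (hRmeas g B hB).inter
        (MeasurableSet.iInter fun m => MeasurableSet.iInter fun _ =>
          ((T (e m * g⁻¹)).measurable hA).compl)
    have hTm : ∀ (m : ℕ) (x : X), T (e m * g⁻¹) (T g x) = T (e m) x := by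
      intro m x
      rw [← hTmul, inv_mul_cancel_right]
    have hT'm : ∀ (m : ℕ) (y : X'), T' (e m * g⁻¹) (T' g y) = T' (e m) y := by
      intro m y
      rw [← hT'mul, inv_mul_cancel_right]
    have h1 : P n ∩ ⇑(T g) ⁻¹' (R g B) = ⇑(T g) ⁻¹' D := by
      ext x
      rw [hDdef]
      constructor
      · rintro ⟨hP, hR⟩
        obtain ⟨-, hmins⟩ := (hPmem n x).mp hP
        refine ⟨hR, ?_⟩
        refine Set.mem_iInter.mpr fun m => Set.mem_iInter.mpr fun hm => ?_
        rw [Set.mem_compl_iff, Set.mem_preimage, hTm m x]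
        exact hmins m hm
      · rintro ⟨hR, hmins⟩
        obtain ⟨ha, -⟩ := (hRmem g B (T g x)).mp hR
        refine ⟨(hPmem n x).mpr ⟨ha, fun m hm => ?_⟩, hR⟩
        have := Set.mem_iInter.mp (Set.mem_iInter.mp hmins m) hm
        rw [Set.mem_compl_iff, Set.mem_preimage, hTm m x] at this
        exact this
    have h3 : D = Subtype.val '' (⇑θ ⁻¹' (Subtype.val ⁻¹' Q')) := by
      rw [hDdef]
      ext a
      constructor
      · rintro ⟨hRa, hmins⟩
        obtain ⟨ha, hb⟩ := (hRmem g B a).mp hRa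
        refine ⟨⟨a, ha⟩, ?_, rfl⟩
        show (F ⟨a, ha⟩) ∈ Q'
        refine ⟨(θ ⟨a, ha⟩).2, hb, ?_⟩
        refine Set.mem_iInter.mpr fun m => Set.mem_iInter.mpr fun hm => ?_
        rw [Set.mem_compl_iff, Set.mem_preimage]
        intro hcon
        have hnotA := Set.mem_iInter.mp (Set.mem_iInter.mp hmins m) hm
        rw [Set.mem_compl_iff, Set.mem_preimage] at hnotA
        exact hnotA ((hiff ⟨a, ha⟩ (e m * g⁻¹)).mpr hcon)
      · rintro ⟨⟨a, ha⟩, hmem, rfl⟩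
        have hQ : (F ⟨a, ha⟩) ∈ Q' := hmem
        obtain ⟨hA'mem, hBmem, hmins'⟩ := hQ
        refine ⟨(hRmem g B a).mpr ⟨ha, hBmem⟩, ?_⟩
        refine Set.mem_iInter.mpr fun m => Set.mem_iInter.mpr fun hm => ?_
        rw [Set.mem_compl_iff, Set.mem_preimage]
        intro hcon
        have hnotA' := Set.mem_iInter.mp (Set.mem_iInter.mp hmins' m) hm
        rw [Set.mem_compl_iff, Set.mem_preimage] at hnotA'
        exact hnotA' ((hiff ⟨a, ha⟩ (e m * g⁻¹)).mp hcon)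
    have h5 : P' n ∩ B = ⇑(T' g) ⁻¹' Q' := by
      ext y
      rw [hQ'def, hWdef]
      constructor
      · rintro ⟨hP, hBy⟩
        obtain ⟨hin, hmins⟩ := (hP'mem n y).mp hP
        refine ⟨hin, ?_, ?_⟩
        · rw [Set.mem_preimage, hT'inv g y]
          exact hBy
        · refine Set.mem_iInter.mpr fun m => Set.mem_iInter.mpr fun hm => ?_
          rw [Set.mem_compl_iff, Set.mem_preimage, hT'm m y]
          exact hmins m hm
      · rintro ⟨hin, hBy, hmins⟩
        rw [Set.mem_preimage, hT'inv g y] at hBy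
        refine ⟨(hP'mem n y).mpr ⟨hin, fun m hm => ?_⟩, hBy⟩
        have := Set.mem_iInter.mp (Set.mem_iInter.mp hmins m) hm
        rw [Set.mem_compl_iff, Set.mem_preimage, hT'm m y] at this
        exact this
    calc μ (P n ∩ ⇑(T g) ⁻¹' (R g B)) = μ (⇑(T g) ⁻¹' D) := by rw [h1]
      _ = μ D := (hTmp g).measure_preimage hDmeas.nullMeasurableSet
      _ = μ (Subtype.val '' (⇑θ ⁻¹' (Subtype.val ⁻¹' Q'))) := by rw [h3]
      _ = μ' Q' := hθpres Q' hQ'meas Set.inter_subset_left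
      _ = μ' (⇑(T' g) ⁻¹' Q') :=
          ((hT'mp g).measure_preimage hQ'meas.nullMeasurableSet).symm
      _ = μ' (P' n ∩ B) := by rw [h5]
  -- the full measure identity
  have hmeasure : ∀ B : Set X', MeasurableSet B → B ⊆ X₀' → μ (X₀ ∩ Φ ⁻¹' B) = μ' B := by
    intro B hB hBsub
    rw [hkey B]
    rw [measure_iUnion
      (fun m n hmn => ((hPdisj hmn).mono Set.inter_subset_left Set.inter_subset_left))
      (fun n => (hPmeas n).inter ((T (e n)).measurable (hRmeas (e n) B hB)))]
    have hsum : ∀ n : ℕ, μ (P n ∩ ⇑(T (e n)) ⁻¹' (R (e n) B)) = μ' (P' n ∩ B) :=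
      hpiece B hB
    rw [tsum_congr hsum]
    rw [← measure_iUnion
      (fun m n hmn => ((hP'disj hmn).mono Set.inter_subset_left Set.inter_subset_left))
      (fun n => (hP'meas n).inter hB)]
    congr 1
    rw [← Set.iUnion_inter, hP'union]
    exact Set.inter_eq_right.mpr hBsub
  exact ⟨X₀, X₀', Φ, hX₀meas, hX₀'meas, hX₀conull, hX₀'conull, hX₀inv, hX₀'inv,
    Set.InvOn.bijOn ⟨hΨΦ, hΦΨ⟩ hΦmaps hΨmaps, hΦmeasOn, hmeasure,
    fun g x hx => hequiv g x hx⟩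
end

section
/- Let G be a group and let (C_n)_{n≥1}, (F_n)_{n≥0} be sequences of finite subsets of G satisfying conditions (I)–(III). Then for all integers 0 ≤ l < m and all elements c_i ∈ C_i (l < i ≤ m): if F_l ∩ (F_l c_{l+1} c_{l+2} ⋯ c_m) ≠ ∅, then c_{l+1} = c_{l+2} = ⋯ = c_m = 1. Consequently, for all k ≤ l < m one has (C_{k+1} ⋯ C_l C_{l+1} ⋯ C_m) ∩ F_l = C_{k+1} ⋯ C_l, where C_{k+1} ⋯ C_l denotes the product set {c_{k+1} ⋯ c_l : c_i ∈ C_i} (interpreted as {1} when k = l). -/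
open Pointwise

private theorem aux_mono {G : Type*} [Group G] [DecidableEq G] (C F : ℕ → Finset G)
    (hI : ∀ n : ℕ, (1 : G) ∈ C (n + 1))
    (hII : ∀ n : ℕ, F n * C (n + 1) ⊆ F (n + 1)) :
    ∀ a b : ℕ, a ≤ b → F a ⊆ F b := by
  intro a b hab
  induction b, hab using Nat.le_induction with
  | base => exact subset_rfl
  | succ n hn ih =>
      refine ih.trans fun x hx => hII n ?_
      rw [← mul_one x]
      exact Finset.mul_mem_mul hx (hI n)

private theorem aux_prodmem {G : Type*} [Group G] [DecidableEq G] (C F : ℕ → Finset G)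
    (hII : ∀ n : ℕ, F n * C (n + 1) ⊆ F (n + 1)) (c : ℕ → G) :
    ∀ (n k : ℕ) (y : G), y ∈ F k → (∀ j, j < n → c (k + 1 + j) ∈ C (k + 1 + j)) →
      y * ((List.range n).map fun j => c (k + 1 + j)).prod ∈ F (k + n) := by
  intro n
  induction n with
  | zero => intro k y hy _; simpa using hy
  | succ n ih =>
      intro k y hy hc
      rw [List.range_succ, List.map_append, List.prod_append]
      simp only [List.map_cons, List.map_nil, List.prod_cons, List.prod_nil, mul_one,
        ← mul_assoc]
      have h1 : y * ((List.range n).map fun j => c (k + 1 + j)).prod ∈ F (k + n) :=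
        ih k y hy fun j hj => hc j (Nat.lt_succ_of_lt hj)
      have h2 : c (k + 1 + n) ∈ C (k + n + 1) := by
        rw [show k + n + 1 = k + 1 + n by omega]; exact hc n (Nat.lt_succ_self n)
      exact hII (k + n) (Finset.mul_mem_mul h1 h2)

private theorem aux_memprod {G : Type*} [Group G] [DecidableEq G] :
    ∀ (n : ℕ) (D : ℕ → Finset G) (x : G),
      x ∈ ((List.range n).map fun j => D j).prod ↔
        ∃ c : ℕ → G, (∀ j, j < n → c j ∈ D j) ∧
          x = ((List.range n).map fun j => c j).prod := by
  intro n
  induction n with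
  | zero =>
      intro D x
      simp only [List.range_zero, List.map_nil, List.prod_nil, Finset.mem_one]
      constructor
      · rintro rfl; exact ⟨fun _ => 1, fun j hj => absurd hj (Nat.not_lt_zero j), rfl⟩
      · rintro ⟨c, _, rfl⟩; rfl
  | succ n ih =>
      intro D x
      rw [List.range_succ, List.map_append, List.prod_append]
      simp only [List.map_cons, List.map_nil, List.prod_cons, List.prod_nil, mul_one]
      rw [Finset.mem_mul]
      constructor
      · rintro ⟨y, hy, d, hd, rfl⟩
        obtain ⟨c, hc, rfl⟩ := (ih D y).mp hy
        refine ⟨fun j => if j < n then c j else d, fun j hj => ?_, ?_⟩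
        · by_cases h : j < n
          · simpa [h] using hc j h
          · have : j = n := by omega
            simpa [this] using hd
        · rw [List.map_append, List.prod_append]
          simp only [List.map_cons, List.map_nil, List.prod_cons, List.prod_nil, mul_one]
          congr 1
          · congr 1
            refine List.map_congr_left fun j hj => ?_
            rw [List.mem_range] at hj
            simp [hj]
          · simp
      · rintro ⟨c, hc, rfl⟩
        rw [List.map_append, List.prod_append]
        simp only [List.map_cons, List.map_nil, List.prod_cons, List.prod_nil, mul_one]
        exact ⟨_, (ih D _).mpr ⟨c, fun j hj => hc j (Nat.lt_succ_of_lt hj), rfl⟩,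
          c n, hc n (Nat.lt_succ_self n), rfl⟩

private theorem aux_part1 {G : Type*} [Group G] [DecidableEq G]
    (C F : ℕ → Finset G)
    (hI : ∀ n : ℕ, (1 : G) ∈ C (n + 1) ∧ 1 < (C (n + 1)).card)
    (hII : ∀ n : ℕ, F n * C (n + 1) ⊆ F (n + 1))
    (hIII : ∀ n : ℕ, ∀ c ∈ C (n + 1), ∀ c' ∈ C (n + 1), c ≠ c' →
      Disjoint ((F n).image (· * c)) ((F n).image (· * c'))) :
    ∀ (l m : ℕ), l < m → ∀ c : ℕ → G, (∀ i, l < i → i ≤ m → c i ∈ C i) →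
      ((F l) ∩ (F l).image
        (· * ((List.range (m - l)).map fun j => c (l + 1 + j)).prod)).Nonempty →
      ∀ i, l < i → i ≤ m → c i = 1 := by
  have hmono := aux_mono C F (fun n => (hI n).1) hII
  intro l m hlm
  induction m, hlm using Nat.le_induction with
  | base =>
      intro c hc hne i hi1 hi2
      have hi : i = l + 1 := by omega
      subst hi
      obtain ⟨x, hx⟩ := hne
      rw [Finset.mem_inter, Finset.mem_image] at hx
      obtain ⟨hxF, y, hyF, hyx⟩ := hx
      simp only [show l + 1 - l = 1 by omega, List.range_succ, List.range_zero, List.nil_append, List.map_cons, List.map_nil,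
        List.prod_cons, List.prod_nil, mul_one, add_zero] at hyx
      by_contra hne1
      have hdisj := hIII l (c (l + 1)) (hc (l + 1) (Nat.lt_succ_self l) le_rfl)
        1 (hI l).1 hne1
      exact Finset.disjoint_left.mp hdisj (Finset.mem_image.mpr ⟨y, hyF, hyx⟩)
        (Finset.mem_image.mpr ⟨x, hxF, mul_one x⟩)
  | succ m hm ih =>
      intro c hc hne
      obtain ⟨x, hx⟩ := hne
      rw [Finset.mem_inter, Finset.mem_image] at hx
      obtain ⟨hxF, y, hyF, hyx⟩ := hx
      rw [show m + 1 - l = (m - l) + 1 by omega, List.range_succ, List.map_append,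
        List.prod_append] at hyx
      simp only [List.map_cons, List.map_nil, List.prod_cons, List.prod_nil, mul_one,
        ← mul_assoc, show l + 1 + (m - l) = m + 1 by omega] at hyx
      set P := ((List.range (m - l)).map fun j => c (l + 1 + j)).prod with hP
      have hyP : y * P ∈ F m := by
        have := aux_prodmem C F hII c (m - l) l y hyF
          (fun j hj => hc (l + 1 + j) (by omega) (by omega))
        rwa [show l + (m - l) = m by omega] at this
      have hcm : c (m + 1) = 1 := by
        by_contra hne1
        have hcm' : c (m + 1) ∈ C (m + 1) := hc (m + 1) (by omega) le_rfl
        have hdisj := hIII m (c (m + 1)) hcm' 1 (hI m).1 hne1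
        exact Finset.disjoint_left.mp hdisj (Finset.mem_image.mpr ⟨y * P, hyP, hyx⟩)
          (Finset.mem_image.mpr ⟨x, hmono l m (by omega) hxF, mul_one x⟩)
      intro i hi1 hi2
      rcases Nat.lt_or_ge i (m + 1) with h | h
      · refine ih c (fun i hi1 hi2 => hc i hi1 (by omega)) ?_ i hi1 (by omega)
        refine ⟨x, Finset.mem_inter.mpr ⟨hxF, Finset.mem_image.mpr ⟨y, hyF, ?_⟩⟩⟩
        rw [← hyx, hcm, mul_one]
      · have : i = m + 1 := by omega
        rw [this]; exact hcm

/- STATEMENT 19: under conditions (I)–(III) (with `C (i)` meaningful for i ≥ 1), if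
F_l meets F_l·c_{l+1}⋯c_m for some choice of c_i ∈ C_i (l < i ≤ m), then all these
c_i equal 1; consequently (C_{k+1}⋯C_m) ∩ F_l = C_{k+1}⋯C_l for k ≤ l < m. -/
theorem stmt19 {G : Type*} [Group G] [DecidableEq G]
    (C F : ℕ → Finset G)
    (hI0 : (1 : G) ∈ F 0)
    (hI : ∀ n : ℕ, (1 : G) ∈ C (n + 1) ∧ 1 < (C (n + 1)).card)
    (hII : ∀ n : ℕ, F n * C (n + 1) ⊆ F (n + 1))
    (hIII : ∀ n : ℕ, ∀ c ∈ C (n + 1), ∀ c' ∈ C (n + 1), c ≠ c' →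
      Disjoint ((F n).image (· * c)) ((F n).image (· * c'))) :
    (∀ (l m : ℕ), l < m → ∀ c : ℕ → G, (∀ i, l < i → i ≤ m → c i ∈ C i) →
      ((F l) ∩ (F l).image
        (· * ((List.range (m - l)).map fun j => c (l + 1 + j)).prod)).Nonempty →
      ∀ i, l < i → i ≤ m → c i = 1) ∧
    (∀ (k l m : ℕ), k ≤ l → l < m →
      (((List.range (m - k)).map fun j => C (k + 1 + j)).prod : Finset G) ∩ F l =
        (((List.range (l - k)).map fun j => C (k + 1 + j)).prod : Finset G)) := by
  have hmono := aux_mono C F (fun n => (hI n).1) hII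
  have p1 := aux_part1 C F hI hII hIII
  refine ⟨p1, ?_⟩
  intro k l m hkl hlm
  -- a helper: given c with c j ∈ C (k+1+j) for j < l - k, the product lies in F l
  have key : ∀ c : ℕ → G, (∀ j, j < l - k → c j ∈ C (k + 1 + j)) →
      ((List.range (l - k)).map fun j => c j).prod ∈ F l := by
    intro c hc
    have hmap : ((List.range (l - k)).map fun j => c j)
        = ((List.range (l - k)).map fun j => (fun i => c (i - (k + 1))) (k + 1 + j)) := by
      refine List.map_congr_left fun j _ => ?_
      simp only [show k + 1 + j - (k + 1) = j by omega]
    have h1 : (1 : G) ∈ F k := hmono 0 k (Nat.zero_le k) hI0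
    have := aux_prodmem C F hII (fun i => c (i - (k + 1))) (l - k) k 1 h1
      (fun j hj => by simpa only [show k + 1 + j - (k + 1) = j by omega] using hc j hj)
    rw [show k + (l - k) = l by omega, one_mul, ← hmap] at this
    exact this
  ext x
  simp only [Finset.mem_inter]
  constructor
  · rintro ⟨hxP, hxF⟩
    obtain ⟨c, hc, hx⟩ := (aux_memprod (m - k) (fun j => C (k + 1 + j)) x).mp hxP
    rw [show m - k = (l - k) + (m - l) by omega, List.range_add, List.map_append,
      List.map_map] at hx
    simp only [Function.comp_def] at hx
    rw [List.prod_append] at hx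
    set y := ((List.range (l - k)).map fun j => c j).prod with hy
    have hyF : y ∈ F l := key c fun j hj => hc j (by omega)
    -- rewrite tail product in the shape needed by p1
    have hmap2 : ((List.range (m - l)).map fun j => c (l - k + j))
        = ((List.range (m - l)).map fun j => (fun i => c (i - (k + 1))) (l + 1 + j)) := by
      refine List.map_congr_left fun j _ => ?_
      simp only [show l + 1 + j - (k + 1) = l - k + j by omega]
    have hones : ∀ i, l < i → i ≤ m → c (i - (k + 1)) = 1 := by
      refine p1 l m hlm (fun i => c (i - (k + 1))) (fun i hi1 hi2 => ?_) ?_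
      · have := hc (i - (k + 1)) (by omega)
        rwa [show k + 1 + (i - (k + 1)) = i by omega] at this
      · refine ⟨x, Finset.mem_inter.mpr ⟨hxF, Finset.mem_image.mpr ⟨y, hyF, ?_⟩⟩⟩
        rw [← hmap2, ← hx]
    have hz1 : ((List.range (m - l)).map fun j => c (l - k + j)).prod = 1 := by
      refine List.prod_eq_one fun a ha => ?_
      obtain ⟨j, hj, rfl⟩ := List.mem_map.mp ha
      rw [List.mem_range] at hj
      have := hones (l + 1 + j) (by omega) (by omega)
      rwa [show l + 1 + j - (k + 1) = l - k + j by omega] at this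
    rw [hz1, mul_one] at hx
    exact (aux_memprod (l - k) (fun j => C (k + 1 + j)) x).mpr
      ⟨c, fun j hj => hc j (by omega), hx⟩
  · intro hxP
    obtain ⟨c, hc, hx⟩ := (aux_memprod (l - k) (fun j => C (k + 1 + j)) x).mp hxP
    refine ⟨?_, hx ▸ key c hc⟩
    refine (aux_memprod (m - k) (fun j => C (k + 1 + j)) x).mpr
      ⟨fun j => if j < l - k then c j else 1, fun j hj => ?_, ?_⟩
    · by_cases h : j < l - k
      · simpa [h] using hc j h
      · have h1 : (1 : G) ∈ C (k + j + 1) := (hI (k + j)).1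
        rw [show k + 1 + j = k + j + 1 by omega]
        simpa [h] using h1
    · rw [show m - k = (l - k) + (m - l) by omega, List.range_add, List.map_append,
        List.map_map, List.prod_append]
      simp only [Function.comp_def]
      have e1 : ((List.range (l - k)).map fun j => if j < l - k then c j else 1)
          = ((List.range (l - k)).map fun j => c j) := by
        refine List.map_congr_left fun j hj => ?_
        rw [List.mem_range] at hj
        simp [hj]
      have e2 : ((List.range (m - l)).map fun j =>
          if l - k + j < l - k then c (l - k + j) else 1).prod = 1 := by
        refine List.prod_eq_one fun a ha => ?_
        obtain ⟨j, _, rfl⟩ := List.mem_map.mp ha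
        simp
      rw [e1, e2, mul_one, hx]
end
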